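/- arXiv:1706.01903 — 6 statements merged into one kernel-verified Lean document; each statement's English description precedes it below -/
import Mathlib

section
/- Let V be a finite-dimensional real vector space with a nondegenerate symmetric bilinear form B, let Λ be a self-dual integral lattice in V, let V = V₁ ⊕ V₂ be an orthogonal direct-sum decomposition, and set Λᵢ = Λ ∩ Vᵢ; assume each Λᵢ spans Vᵢ over ℝ. Then there exists an isomorphism of abelian groups φ : Λ₁*/Λ₁ → Λ₂*/Λ₂ (discriminant groups, with duals taken inside Vᵢ) such that for all a₁ ∈ Λ₁* and a₂ ∈ Λ₂*, one has a₁ + a₂ ∈ Λ if and only if φ([a₁]) = [a₂], where [·] denotes the class modulo Λᵢ. -/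
/-- The dual lattice of a lattice `L` inside a subspace `W` of `V`, with respect to the
bilinear form `B`: the set of vectors of `W` pairing integrally with every element of `L`. -/
def dualLattice {V : Type*} [AddCommGroup V] [Module ℝ V]
    (B : V →ₗ[ℝ] V →ₗ[ℝ] ℝ) (W : Submodule ℝ V) (L : AddSubgroup V) : AddSubgroup V where
  carrier := {v | v ∈ W ∧ ∀ l ∈ L, ∃ n : ℤ, B v l = (n : ℝ)}
  zero_mem' := ⟨W.zero_mem, fun l _ => ⟨0, by simp⟩⟩
  add_mem' := by
    rintro a b ⟨haW, ha⟩ ⟨hbW, hb⟩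
    refine ⟨W.add_mem haW hbW, fun l hl => ?_⟩
    obtain ⟨m, hm⟩ := ha l hl
    obtain ⟨n, hn⟩ := hb l hl
    exact ⟨m + n, by simp [map_add, hm, hn]⟩
  neg_mem' := by
    rintro a ⟨haW, ha⟩
    refine ⟨W.neg_mem haW, fun l hl => ?_⟩
    obtain ⟨m, hm⟩ := ha l hl
    exact ⟨-m, by simp [map_neg, hm]⟩

lemma mem_dualLattice {V : Type*} [AddCommGroup V] [Module ℝ V]
    (B : V →ₗ[ℝ] V →ₗ[ℝ] ℝ) {W : Submodule ℝ V} {L : AddSubgroup V} {v : V} :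
    v ∈ dualLattice B W L ↔ v ∈ W ∧ ∀ l ∈ L, ∃ n : ℤ, B v l = (n : ℝ) := Iff.rfl

lemma dualLattice_closure_eq {V : Type*} [AddCommGroup V] [Module ℝ V]
    (B : V →ₗ[ℝ] V →ₗ[ℝ] ℝ) (W : Submodule ℝ V)
    (hW : ∀ w ∈ W, (∀ u ∈ W, B w u = 0) → w = 0)
    {ι : Type*} [Fintype ι] [DecidableEq ι] (e f : ι → V)
    (hfW : ∀ i, f i ∈ W)
    (hspan : Submodule.span ℝ (Set.range e) = W)
    (hpair : ∀ i j, B (f i) (e j) = if i = j then 1 else 0) :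
    dualLattice B W (AddSubgroup.closure (Set.range e)) = AddSubgroup.closure (Set.range f) := by
  apply le_antisymm
  · rintro v ⟨hvW, hv⟩
    choose n hn using fun j => hv (e j) (AddSubgroup.subset_closure ⟨j, rfl⟩)
    have hBs : ∀ k, B (∑ j, (n j : ℝ) • f j) (e k) = n k := by
      intro k
      rw [map_sum, LinearMap.sum_apply]
      simp only [map_smul, LinearMap.smul_apply, hpair, smul_eq_mul, mul_ite, mul_one, mul_zero]
      simp [Finset.sum_ite_eq']
    have hd : ∀ u ∈ W, B (v - ∑ j, (n j : ℝ) • f j) u = 0 := by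
      intro u hu
      rw [← hspan] at hu
      induction hu using Submodule.span_induction with
      | mem x hx =>
        obtain ⟨k, rfl⟩ := hx
        rw [map_sub, LinearMap.sub_apply, hBs, hn]
        ring
      | zero => simp
      | add x y _ _ hx hy => rw [map_add]; rw [hx, hy]; ring
      | smul c x _ hx => rw [map_smul, smul_eq_mul, hx, mul_zero]
    have h0 := hW _ (sub_mem hvW (Submodule.sum_mem _ fun j _ => W.smul_mem _ (hfW j))) hd
    have hv_eq : v = ∑ j, (n j : ℝ) • f j := by
      have := sub_eq_zero.mp h0; exact this
    rw [hv_eq]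
    refine AddSubgroup.sum_mem _ fun j _ => ?_
    rw [Int.cast_smul_eq_zsmul]
    exact AddSubgroup.zsmul_mem _ (AddSubgroup.subset_closure (Set.mem_range_self j)) _
  · rw [AddSubgroup.closure_le]
    rintro x ⟨i, rfl⟩
    refine ⟨hfW i, fun l hl => ?_⟩
    induction hl using AddSubgroup.closure_induction with
    | mem x hx =>
      obtain ⟨j, rfl⟩ := hx
      refine ⟨if i = j then 1 else 0, ?_⟩
      rw [hpair]; split <;> simp
    | zero => exact ⟨0, by simp⟩
    | add x y _ _ hx hy =>
      obtain ⟨a, ha⟩ := hx; obtain ⟨b, hb⟩ := hy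
      refine ⟨a + b, ?_⟩
      rw [map_add, ha, hb]; push_cast; ring
    | neg x _ hx =>
      obtain ⟨a, ha⟩ := hx
      refine ⟨-a, ?_⟩
      rw [map_neg, ha]; push_cast; ring
lemma discrete_of_pairing {V : Type*} [NormedAddCommGroup V] [NormedSpace ℝ V]
    [FiniteDimensional ℝ V]
    (B : V →ₗ[ℝ] V →ₗ[ℝ] ℝ) (V₁ : Submodule ℝ V)
    (hnd : ∀ w ∈ V₁, (∀ u ∈ V₁, B w u = 0) → w = 0)
    {ι : Type*} [Fintype ι] (c : ι → V)
    (hc : V₁ ≤ Submodule.span ℝ (Set.range c))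
    (L : Submodule ℤ ↥V₁)
    (hL : ∀ y : ↥V₁, y ∈ L → ∀ j, ∃ n : ℤ, B (y : V) (c j) = (n : ℝ)) :
    DiscreteTopology ↥L := by
  classical
  set ψ : ↥V₁ →ₗ[ℝ] (ι → ℝ) :=
    LinearMap.pi (fun j => (B.flip (c j)).comp V₁.subtype) with hψ
  have hψ_apply : ∀ (w : ↥V₁) j, ψ w j = B (w : V) (c j) := fun w j => rfl
  have hψ_inj : Function.Injective ψ := by
    rw [injective_iff_map_eq_zero]
    intro w hw
    have h1 : ∀ u ∈ Submodule.span ℝ (Set.range c), B (w : V) u = 0 := by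
      intro u hu
      induction hu using Submodule.span_induction with
      | mem x hx =>
        obtain ⟨j, rfl⟩ := hx
        have := congrFun hw j
        simpa [hψ_apply] using this
      | zero => simp
      | add x y _ _ hx hy => rw [map_add, hx, hy, add_zero]
      | smul a x _ hx => rw [map_smul, smul_eq_mul, hx, mul_zero]
    have := hnd (w : V) w.2 (fun u hu => h1 u (hc hu))
    exact Subtype.ext this
  set ψc := LinearMap.toContinuousLinearMap ψ with hψc
  have hpos : (0:ℝ) < ‖ψc‖ + 1 := by positivity
  have key : ∀ y : ↥L, ‖(y : ↥V₁)‖ < (‖ψc‖ + 1)⁻¹ → y = 0 := by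
    intro y hy
    by_contra hy0
    have hne : (y : ↥V₁) ≠ 0 := fun h => hy0 (Subtype.ext h)
    have hψne : ψ (y : ↥V₁) ≠ 0 := fun h => hne (hψ_inj (by rw [h, map_zero]))
    obtain ⟨j, hj⟩ : ∃ j, ψ (y : ↥V₁) j ≠ 0 := by
      by_contra h
      push_neg at h
      exact hψne (funext h)
    obtain ⟨n, hn⟩ := hL (y : ↥V₁) y.2 j
    have hnψ : ψ (y : ↥V₁) j = (n : ℝ) := by rw [hψ_apply]; exact hn
    have hn0 : n ≠ 0 := by
      intro h; rw [h] at hnψ; exact hj (by simpa using hnψ)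
    have h1 : (1:ℝ) ≤ |ψ (y : ↥V₁) j| := by
      rw [hnψ, ← Int.cast_abs]
      exact_mod_cast Int.one_le_abs hn0
    have h2 : |ψ (y : ↥V₁) j| ≤ ‖ψ (y : ↥V₁)‖ := by
      rw [← Real.norm_eq_abs]
      exact norm_le_pi_norm _ j
    have h3 : ‖ψ (y : ↥V₁)‖ ≤ ‖ψc‖ * ‖(y : ↥V₁)‖ := ψc.le_opNorm _
    have h4 : ‖ψc‖ * ‖(y : ↥V₁)‖ ≤ (‖ψc‖ + 1) * ‖(y : ↥V₁)‖ := by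
      have := norm_nonneg (y : ↥V₁); nlinarith
    have h5 : (‖ψc‖ + 1) * ‖(y : ↥V₁)‖ < (‖ψc‖ + 1) * (‖ψc‖ + 1)⁻¹ := by
      exact mul_lt_mul_of_pos_left hy hpos
    rw [mul_inv_cancel₀ (ne_of_gt hpos)] at h5
    linarith
  rw [discreteTopology_iff_isOpen_singleton_zero]
  have heq : ({0} : Set ↥L) =
      (fun y : ↥L => (y : ↥V₁)) ⁻¹' Metric.ball (0 : ↥V₁) ((‖ψc‖ + 1)⁻¹) := by
    ext y
    simp only [Set.mem_singleton_iff, Set.mem_preimage, Metric.mem_ball, dist_zero_right]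
    constructor
    · rintro rfl
      simpa using inv_pos.mpr hpos
    · exact key y
  rw [heq]
  exact (continuous_subtype_val).isOpen_preimage _ Metric.isOpen_ball

open Submodule in
lemma dualLattice_eq_proj {V : Type*} [NormedAddCommGroup V] [NormedSpace ℝ V]
    [FiniteDimensional ℝ V]
    (B : V →ₗ[ℝ] V →ₗ[ℝ] ℝ)
    (hsymm : ∀ x y, B x y = B y x)
    (hnondeg : ∀ x, (∀ y, B x y = 0) → x = 0)
    (Λ : AddSubgroup V)
    (hspan : Submodule.span ℝ (Λ : Set V) = ⊤)
    (hint : ∀ x ∈ Λ, ∀ y ∈ Λ, ∃ n : ℤ, B x y = (n : ℝ))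
    (hselfdual : ∀ v : V, v ∈ Λ ↔ ∀ l ∈ Λ, ∃ n : ℤ, B v l = (n : ℝ))
    (V₁ V₂ : Submodule ℝ V)
    (hcompl : IsCompl V₁ V₂)
    (horth : ∀ v₁ ∈ V₁, ∀ v₂ ∈ V₂, B v₁ v₂ = 0)
    (hspan1 : Submodule.span ℝ ((Λ ⊓ V₁.toAddSubgroup : AddSubgroup V) : Set V) = V₁) :
    dualLattice B V₁ (Λ ⊓ V₁.toAddSubgroup) =
      AddSubgroup.map (V₁.subtype ∘ₗ V₁.projectionOnto V₂ hcompl).toAddMonoidHom Λ := by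
  classical
  set π := V₁.projectionOnto V₂ hcompl with hπdef
  set p : V →ₗ[ℝ] V := V₁.subtype ∘ₗ π with hpdef
  have hp_mem : ∀ x, p x ∈ V₁ := fun x => (π x).2
  have hp_sub : ∀ x, x - p x ∈ V₂ := by
    intro x
    have h := Submodule.projection_add_projection_eq_self hcompl x
    have : x - p x = ↑(V₂.projectionOnto V₁ hcompl.symm x) := by
      rw [sub_eq_iff_eq_add, add_comm]
      exact h.symm
    rw [this]
    exact (V₂.projectionOnto V₁ hcompl.symm x).2
  -- nondegeneracy of B on V₁
  have hW : ∀ w ∈ V₁, (∀ u ∈ V₁, B w u = 0) → w = 0 := by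
    intro w hw h
    apply hnondeg
    intro y
    have hy : B w y = B w (p y) + B w (y - p y) := by
      rw [← map_add, add_sub_cancel]
    rw [hy, h (p y) (hp_mem y), horth w hw _ (hp_sub y), add_zero]
  -- the projected lattice, as a ℤ-submodule of ↥V₁
  set Λ₁ : AddSubgroup V := Λ ⊓ V₁.toAddSubgroup with hΛ₁def
  set L : Submodule ℤ ↥V₁ :=
    Submodule.map (π.restrictScalars ℤ) (AddSubgroup.toIntSubmodule Λ) with hLdef
  have hL_mem : ∀ y : ↥V₁, y ∈ L ↔ ∃ x ∈ Λ, π x = y := by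
    intro y
    constructor
    · rintro ⟨x, hx, rfl⟩; exact ⟨x, hx, rfl⟩
    · rintro ⟨x, hx, rfl⟩; exact ⟨x, hx, rfl⟩
  -- integral pairing of projections with Λ₁
  have hproj_pair : ∀ x ∈ Λ, ∀ l ∈ Λ₁, ∃ n : ℤ, B (p x) l = (n : ℝ) := by
    intro x hx l hl
    obtain ⟨hlΛ, hlV₁⟩ := hl
    obtain ⟨n, hn⟩ := hint x hx l hlΛ
    refine ⟨n, ?_⟩
    have : B (p x) l = B x l - B (x - p x) l := by
      rw [map_sub, LinearMap.sub_apply]; ring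
    rw [this, hn, hsymm (x - p x) l, horth l hlV₁ _ (hp_sub x), sub_zero]
  -- a finite spanning family inside Λ₁
  obtain ⟨s, hs_sub, hs_span, hs_ind⟩ := exists_linearIndependent ℝ ((Λ₁ : AddSubgroup V) : Set V)
  have hs_fin : s.Finite := hs_ind.setFinite
  haveI := hs_fin.fintype
  set c : ↥s → V := fun i => (i : V) with hcdef
  have hc_range : Set.range c = s := Subtype.range_coe
  have hc_span : Submodule.span ℝ (Set.range c) = V₁ := by
    rw [hc_range, hs_span, hspan1]
  -- discreteness of L
  haveI : DiscreteTopology ↥L := by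
    refine discrete_of_pairing B V₁ hW c (le_of_eq hc_span.symm) L ?_
    intro y hy j
    obtain ⟨x, hx, rfl⟩ := (hL_mem y).mp hy
    exact hproj_pair x hx (c j) (hs_sub j.2)
  -- L is a ZLattice in ↥V₁
  haveI : IsZLattice ℝ L := by
    constructor
    have himg : (L : Set ↥V₁) = π '' (Λ : Set V) := by
      ext y; simp [hL_mem y, Set.mem_image]
    rw [himg, Submodule.span_image, hspan, Submodule.map_top,
      Submodule.range_projectionOnto]
  -- free module and bases
  haveI : Module.Finite ℤ L := ZLattice.module_finite ℝ L
  haveI : Module.Free ℤ L := ZLattice.module_free ℝ L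
  set b := Module.Free.chooseBasis ℤ L with hbdef
  set bV := b.ofZLatticeBasis ℝ L with hbVdef
  set B₁ : LinearMap.BilinForm ℝ ↥V₁ := B.compl₁₂ V₁.subtype V₁.subtype with hB₁def
  have hB₁ : B₁.Nondegenerate := by
    refine ⟨fun x hx => ?_, fun x hx => ?_⟩
    · exact Subtype.ext (hW (x : V) x.2 (fun u hu => hx ⟨u, hu⟩))
    · exact Subtype.ext (hW (x : V) x.2 (fun u hu => by rw [hsymm]; exact hx ⟨u, hu⟩))
  set fb := LinearMap.BilinForm.dualBasis B₁ hB₁ bV with hfbdef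
  set e : _ → V := fun i => ((bV i : ↥V₁) : V) with hedef
  set f : _ → V := fun i => ((fb i : ↥V₁) : V) with hfdef
  have hpair : ∀ i j, B (f i) (e j) = if i = j then 1 else 0 := by
    intro i j
    have h := LinearMap.BilinForm.apply_dualBasis_left hB₁ bV i j
    have h2 : B (f i) (e j) = B₁ (fb i) (bV j) := rfl
    rw [h2, h]
    by_cases hc : i = j <;> simp [hc, eq_comm]
  have hpair' : ∀ i j, B (e i) (f j) = if i = j then 1 else 0 := by
    intro i j
    rw [hsymm]
    have h := LinearMap.BilinForm.apply_dualBasis_left hB₁ bV j i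
    have h2 : B (f j) (e i) = B₁ (fb j) (bV i) := rfl
    rw [h2, h]
  have he_span : Submodule.span ℝ (Set.range e) = V₁ := by
    have hre : Set.range e = V₁.subtype '' Set.range bV := by
      ext w
      simp only [hedef, Set.mem_range, Set.mem_image, Submodule.coe_subtype]
      constructor
      · rintro ⟨i, rfl⟩; exact ⟨bV i, ⟨i, rfl⟩, rfl⟩
      · rintro ⟨y, ⟨i, rfl⟩, rfl⟩; exact ⟨i, rfl⟩
    rw [hre, Submodule.span_image, Module.Basis.span_eq, Submodule.map_top, Submodule.range_subtype]
  have hf_span : Submodule.span ℝ (Set.range f) = V₁ := by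
    have hre : Set.range f = V₁.subtype '' Set.range fb := by
      ext w
      simp only [hfdef, Set.mem_range, Set.mem_image, Submodule.coe_subtype]
      constructor
      · rintro ⟨i, rfl⟩; exact ⟨fb i, ⟨i, rfl⟩, rfl⟩
      · rintro ⟨y, ⟨i, rfl⟩, rfl⟩; exact ⟨i, rfl⟩
    rw [hre, Submodule.span_image, Module.Basis.span_eq, Submodule.map_top, Submodule.range_subtype]
  have hbV_in_L : ∀ i, bV i ∈ L := by
    intro i
    rw [hbVdef, Module.Basis.ofZLatticeBasis_apply]
    exact (b i).2
  have hAe : AddSubgroup.closure (Set.range e) = AddSubgroup.map p.toAddMonoidHom Λ := by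
    apply le_antisymm
    · rw [AddSubgroup.closure_le]
      rintro w ⟨i, rfl⟩
      obtain ⟨x, hx, hxe⟩ := (hL_mem _).mp (hbV_in_L i)
      refine AddSubgroup.mem_map.mpr ⟨x, hx, ?_⟩
      show ((π x : ↥V₁) : V) = e i
      rw [hxe]
    · rintro w hw
      obtain ⟨x, hx, rfl⟩ := AddSubgroup.mem_map.mp hw
      have hπL : π x ∈ Submodule.span ℤ (Set.range bV) := by
        rw [hbVdef, Module.Basis.ofZLatticeBasis_span]
        exact (hL_mem _).mpr ⟨x, hx, rfl⟩
      have hcl : ∀ y : ↥V₁, y ∈ Submodule.span ℤ (Set.range bV) →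
          (y : V) ∈ AddSubgroup.closure (Set.range e) := by
        intro y hy
        induction hy using Submodule.span_induction with
        | mem z hz =>
          obtain ⟨i, rfl⟩ := hz
          exact AddSubgroup.subset_closure (Set.mem_range_self i)
        | zero => simpa using (AddSubgroup.closure (Set.range e)).zero_mem
        | add u v _ _ hu hv =>
          push_cast
          exact AddSubgroup.add_mem _ hu hv
        | smul a u _ hu =>
          have hcoe : ((a • u : ↥V₁) : V) = a • (u : V) := rfl
          rw [hcoe]
          exact AddSubgroup.zsmul_mem _ hu a
      exact hcl (π x) hπL
  have hdual_A : dualLattice B V₁ (AddSubgroup.closure (Set.range e)) = Λ₁ := by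
    rw [hAe]
    ext v
    rw [mem_dualLattice]
    constructor
    · rintro ⟨hvW, hv⟩
      refine ⟨(hselfdual v).mpr fun l hl => ?_, hvW⟩
      obtain ⟨n, hn⟩ := hv (p l) (AddSubgroup.mem_map.mpr ⟨l, hl, rfl⟩)
      refine ⟨n, ?_⟩
      have hdec : B v l = B v (p l) + B v (l - p l) := by rw [← map_add, add_sub_cancel]
      rw [hdec, hn, horth v hvW _ (hp_sub l), add_zero]
    · rintro ⟨hvΛ, hvV₁⟩
      refine ⟨hvV₁, ?_⟩
      rintro w hw
      obtain ⟨x, hx, rfl⟩ := AddSubgroup.mem_map.mp hw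
      obtain ⟨n, hn⟩ := hproj_pair x hx v ⟨hvΛ, hvV₁⟩
      exact ⟨n, by rw [hsymm]; exact hn⟩
  have hfW : ∀ i, f i ∈ V₁ := fun i => (fb i).2
  have heW : ∀ i, e i ∈ V₁ := fun i => (bV i).2
  have h1 := dualLattice_closure_eq B V₁ hW e f hfW he_span hpair
  have h2 := dualLattice_closure_eq B V₁ hW f e heW hf_span hpair'
  have hΛ₁f : Λ₁ = AddSubgroup.closure (Set.range f) := hdual_A.symm.trans h1
  rw [hΛ₁f, h2, hAe]

/-- If `Λ` is a self-dual integral lattice in a finite-dimensional real vector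
space `V` with nondegenerate symmetric bilinear form `B`, and `V = V₁ ⊕ V₂` is an orthogonal
decomposition with `Λᵢ = Λ ∩ Vᵢ` spanning `Vᵢ`, then there is an isomorphism of abelian groups
`φ : Λ₁*/Λ₁ ≃+ Λ₂*/Λ₂` such that `a₁ + a₂ ∈ Λ` iff `φ [a₁] = [a₂]`. -/
theorem selfdual_lattice_decomposition_discriminant_iso
    {V : Type*} [NormedAddCommGroup V] [NormedSpace ℝ V] [FiniteDimensional ℝ V]
    (B : V →ₗ[ℝ] V →ₗ[ℝ] ℝ)
    (hsymm : ∀ x y, B x y = B y x)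
    (hnondeg : ∀ x, (∀ y, B x y = 0) → x = 0)
    (Λ : AddSubgroup V)
    (hdisc : DiscreteTopology Λ)
    (hspan : Submodule.span ℝ (Λ : Set V) = ⊤)
    (hint : ∀ x ∈ Λ, ∀ y ∈ Λ, ∃ n : ℤ, B x y = (n : ℝ))
    (hselfdual : ∀ v : V, v ∈ Λ ↔ ∀ l ∈ Λ, ∃ n : ℤ, B v l = (n : ℝ))
    (V₁ V₂ : Submodule ℝ V)
    (hcompl : IsCompl V₁ V₂)
    (horth : ∀ v₁ ∈ V₁, ∀ v₂ ∈ V₂, B v₁ v₂ = 0)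
    (hspan1 : Submodule.span ℝ ((Λ ⊓ V₁.toAddSubgroup : AddSubgroup V) : Set V) = V₁)
    (hspan2 : Submodule.span ℝ ((Λ ⊓ V₂.toAddSubgroup : AddSubgroup V) : Set V) = V₂) :
    ∃ φ : (dualLattice B V₁ (Λ ⊓ V₁.toAddSubgroup) ⧸
            (Λ ⊓ V₁.toAddSubgroup).addSubgroupOf (dualLattice B V₁ (Λ ⊓ V₁.toAddSubgroup))) ≃+
          (dualLattice B V₂ (Λ ⊓ V₂.toAddSubgroup) ⧸
            (Λ ⊓ V₂.toAddSubgroup).addSubgroupOf (dualLattice B V₂ (Λ ⊓ V₂.toAddSubgroup))),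
      ∀ (a₁ : dualLattice B V₁ (Λ ⊓ V₁.toAddSubgroup))
        (a₂ : dualLattice B V₂ (Λ ⊓ V₂.toAddSubgroup)),
        ((a₁ : V) + (a₂ : V) ∈ Λ) ↔
          φ (QuotientAddGroup.mk a₁) = QuotientAddGroup.mk a₂ := by
  classical
  have horth2 : ∀ v₂ ∈ V₂, ∀ v₁ ∈ V₁, B v₂ v₁ = 0 := by
    intro v₂ h2 v₁ h1; rw [hsymm]; exact horth v₁ h1 v₂ h2
  set π₁ := V₁.projectionOnto V₂ hcompl with hπ₁def
  set π₂ := V₂.projectionOnto V₁ hcompl.symm with hπ₂def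
  set p₁ : V →ₗ[ℝ] V := V₁.subtype ∘ₗ π₁ with hp₁def
  set p₂ : V →ₗ[ℝ] V := V₂.subtype ∘ₗ π₂ with hp₂def
  have hkey1 := dualLattice_eq_proj B hsymm hnondeg Λ hspan hint hselfdual V₁ V₂ hcompl
    horth hspan1
  have hkey2 := dualLattice_eq_proj B hsymm hnondeg Λ hspan hint hselfdual V₂ V₁ hcompl.symm
    horth2 hspan2
  have hadd : ∀ x : V, p₁ x + p₂ x = x := fun x =>
    Submodule.projection_add_projection_eq_self hcompl x
  have hp₁mem : ∀ x, p₁ x ∈ V₁ := fun x => (π₁ x).2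
  have hp₂mem : ∀ x, p₂ x ∈ V₂ := fun x => (π₂ x).2
  have hp₁left : ∀ v, v ∈ V₁ → p₁ v = v := fun v hv => by
    exact congrArg Subtype.val (Submodule.projectionOnto_apply_left hcompl ⟨v, hv⟩)
  have hp₁right : ∀ v, v ∈ V₂ → p₁ v = 0 := fun v hv => by
    show ((π₁ v : ↥V₁) : V) = 0
    rw [Submodule.projectionOnto_apply_of_mem_right hcompl hv]; rfl
  have hp₂left : ∀ v, v ∈ V₂ → p₂ v = v := fun v hv => by
    exact congrArg Subtype.val (Submodule.projectionOnto_apply_left hcompl.symm ⟨v, hv⟩)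
  have hp₂right : ∀ v, v ∈ V₁ → p₂ v = 0 := fun v hv => by
    show ((π₂ v : ↥V₂) : V) = 0
    rw [Submodule.projectionOnto_apply_of_mem_right hcompl.symm hv]; rfl
  have hmem₁ : ∀ x ∈ Λ, p₁ x ∈ dualLattice B V₁ (Λ ⊓ V₁.toAddSubgroup) := by
    intro x hx; rw [hkey1]; exact AddSubgroup.mem_map.mpr ⟨x, hx, rfl⟩
  have hmem₂ : ∀ x ∈ Λ, p₂ x ∈ dualLattice B V₂ (Λ ⊓ V₂.toAddSubgroup) := by
    intro x hx; rw [hkey2]; exact AddSubgroup.mem_map.mpr ⟨x, hx, rfl⟩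
  set D₁ := dualLattice B V₁ (Λ ⊓ V₁.toAddSubgroup) with hD₁def
  set D₂ := dualLattice B V₂ (Λ ⊓ V₂.toAddSubgroup) with hD₂def
  have hD₁mem : ∀ w : V, w ∈ D₁ ↔ ∃ x ∈ Λ, p₁ x = w := by
    intro w; rw [hkey1]; exact AddSubgroup.mem_map
  have hD₂mem : ∀ w : V, w ∈ D₂ ↔ ∃ x ∈ Λ, p₂ x = w := by
    intro w; rw [hkey2]; exact AddSubgroup.mem_map
  set N₁ := (Λ ⊓ V₁.toAddSubgroup).addSubgroupOf D₁ with hN₁def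
  set N₂ := (Λ ⊓ V₂.toAddSubgroup).addSubgroupOf D₂ with hN₂def
  set m₁ : ↥Λ →+ ↥D₁ :=
    { toFun := fun x => ⟨p₁ (x : V), hmem₁ _ x.2⟩
      map_zero' := by ext; simp
      map_add' := fun a b => by ext; simp } with hm₁def
  set m₂ : ↥Λ →+ ↥D₂ :=
    { toFun := fun x => ⟨p₂ (x : V), hmem₂ _ x.2⟩
      map_zero' := by ext; simp
      map_add' := fun a b => by ext; simp } with hm₂def
  set h₁ : ↥Λ →+ D₁ ⧸ N₁ := (QuotientAddGroup.mk' N₁).comp m₁ with hh₁def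
  set h₂ : ↥Λ →+ D₂ ⧸ N₂ := (QuotientAddGroup.mk' N₂).comp m₂ with hh₂def
  have hs₁ : Function.Surjective h₁ := by
    intro q
    obtain ⟨d, rfl⟩ := QuotientAddGroup.mk'_surjective N₁ q
    obtain ⟨x, hx, hpx⟩ := (hD₁mem (d : V)).mp d.2
    exact ⟨⟨x, hx⟩, congrArg (QuotientAddGroup.mk' N₁) (Subtype.ext hpx)⟩
  have hs₂ : Function.Surjective h₂ := by
    intro q
    obtain ⟨d, rfl⟩ := QuotientAddGroup.mk'_surjective N₂ q
    obtain ⟨x, hx, hpx⟩ := (hD₂mem (d : V)).mp d.2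
    exact ⟨⟨x, hx⟩, congrArg (QuotientAddGroup.mk' N₂) (Subtype.ext hpx)⟩
  have hker12 : ∀ x : ↥Λ, (p₁ (x : V) ∈ Λ ↔ p₂ (x : V) ∈ Λ) := by
    intro x
    constructor
    · intro h
      have he : p₂ (x : V) = (x : V) - p₁ (x : V) := by
        rw [eq_sub_iff_add_eq, add_comm]; exact hadd _
      rw [he]; exact AddSubgroup.sub_mem _ x.2 h
    · intro h
      have he : p₁ (x : V) = (x : V) - p₂ (x : V) := by
        rw [eq_sub_iff_add_eq]; exact hadd _
      rw [he]; exact AddSubgroup.sub_mem _ x.2 h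
  have hker : h₁.ker = h₂.ker := by
    ext x
    simp only [AddMonoidHom.mem_ker, hh₁def, hh₂def, AddMonoidHom.comp_apply,
      QuotientAddGroup.mk'_apply, QuotientAddGroup.eq_zero_iff]
    rw [hN₁def, hN₂def, AddSubgroup.mem_addSubgroupOf, AddSubgroup.mem_addSubgroupOf]
    show p₁ (x : V) ∈ Λ ⊓ V₁.toAddSubgroup ↔ p₂ (x : V) ∈ Λ ⊓ V₂.toAddSubgroup
    rw [AddSubgroup.mem_inf, AddSubgroup.mem_inf]
    constructor
    · rintro ⟨h, -⟩; exact ⟨(hker12 x).mp h, hp₂mem _⟩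
    · rintro ⟨h, -⟩; exact ⟨(hker12 x).mpr h, hp₁mem _⟩
  set φ := ((QuotientAddGroup.quotientKerEquivOfSurjective h₁ hs₁).symm.trans
    (QuotientAddGroup.quotientAddEquivOfEq hker)).trans
    (QuotientAddGroup.quotientKerEquivOfSurjective h₂ hs₂) with hφdef
  have hφ : ∀ x : ↥Λ, φ (h₁ x) = h₂ x := by
    intro x
    have e1 : (QuotientAddGroup.quotientKerEquivOfSurjective h₁ hs₁).symm (h₁ x) =
        QuotientAddGroup.mk x := by
      rw [AddEquiv.symm_apply_eq]
      rfl
    rw [hφdef]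
    simp only [AddEquiv.trans_apply, e1, QuotientAddGroup.quotientAddEquivOfEq_mk]
    rfl
  refine ⟨φ, ?_⟩
  intro a₁ a₂
  constructor
  · intro hsum
    set x : ↥Λ := ⟨(a₁ : V) + (a₂ : V), hsum⟩ with hxdef
    have hpx1 : p₁ (x : V) = (a₁ : V) := by
      show p₁ ((a₁ : V) + (a₂ : V)) = (a₁ : V)
      rw [map_add, hp₁left _ a₁.2.1, hp₁right _ a₂.2.1, add_zero]
    have hpx2 : p₂ (x : V) = (a₂ : V) := by
      show p₂ ((a₁ : V) + (a₂ : V)) = (a₂ : V)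
      rw [map_add, hp₂left _ a₂.2.1, hp₂right _ a₁.2.1, zero_add]
    have h1x : h₁ x = QuotientAddGroup.mk a₁ :=
      congrArg (QuotientAddGroup.mk' N₁) (Subtype.ext hpx1)
    have h2x : h₂ x = QuotientAddGroup.mk a₂ :=
      congrArg (QuotientAddGroup.mk' N₂) (Subtype.ext hpx2)
    rw [← h1x, hφ x, h2x]
  · intro hφeq
    obtain ⟨x, hx, hpx⟩ := (hD₁mem (a₁ : V)).mp a₁.2
    have h1x : h₁ ⟨x, hx⟩ = QuotientAddGroup.mk a₁ :=
      congrArg (QuotientAddGroup.mk' N₁) (Subtype.ext hpx)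
    have h2x := hφ ⟨x, hx⟩
    rw [h1x, hφeq] at h2x
    have h2x' : (QuotientAddGroup.mk a₂ : D₂ ⧸ N₂) =
        QuotientAddGroup.mk (m₂ ⟨x, hx⟩) := h2x
    have hdiff := QuotientAddGroup.eq.mp h2x'
    rw [hN₂def, AddSubgroup.mem_addSubgroupOf] at hdiff
    have hcoe : ((-a₂ + m₂ ⟨x, hx⟩ : ↥D₂) : V) = -(a₂ : V) + p₂ x := rfl
    rw [hcoe] at hdiff
    have hdΛ : -(a₂ : V) + p₂ x ∈ Λ := hdiff.1
    have heq : (a₁ : V) + (a₂ : V) = x - (-(a₂ : V) + p₂ x) := by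
      rw [← hpx, eq_sub_of_add_eq (hadd x)]
      abel
    rw [heq]
    exact AddSubgroup.sub_mem _ hx hdΛ
end

section
/- Let V be a finite-dimensional real vector space with a nondegenerate symmetric bilinear form B, let Λ be a self-dual integral lattice in V, let V = V₁ ⊕ V₂ be an orthogonal direct-sum decomposition, and set Λᵢ = Λ ∩ Vᵢ; assume each Λᵢ spans Vᵢ over ℝ. Then the image of Λ under the projection p₁ : V → V₁ (along V₂) is exactly the dual lattice Λ₁* of Λ₁ inside V₁. -/
set_option maxHeartbeats 1000000 in
set_option synthInstance.maxHeartbeats 1000000 in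
/-- If `Λ` is a self-dual integral lattice in a finite-dimensional real vector
space `V` with nondegenerate symmetric bilinear form `B`, and `V = V₁ ⊕ V₂` is an orthogonal
decomposition with `Λᵢ = Λ ∩ Vᵢ` spanning `Vᵢ`, then the image of `Λ` under the projection
`p₁ : V → V₁` along `V₂` is exactly the dual lattice `Λ₁*` of `Λ₁` inside `V₁`. -/
theorem selfdual_lattice_projection_eq_dualLattice
    {V : Type*} [NormedAddCommGroup V] [NormedSpace ℝ V] [FiniteDimensional ℝ V]
    (B : V →ₗ[ℝ] V →ₗ[ℝ] ℝ)
    (hsymm : ∀ x y, B x y = B y x)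
    (hnondeg : ∀ x, (∀ y, B x y = 0) → x = 0)
    (Λ : AddSubgroup V)
    (hdisc : DiscreteTopology Λ)
    (hspan : Submodule.span ℝ (Λ : Set V) = ⊤)
    (hint : ∀ x ∈ Λ, ∀ y ∈ Λ, ∃ n : ℤ, B x y = (n : ℝ))
    (hselfdual : ∀ v : V, v ∈ Λ ↔ ∀ l ∈ Λ, ∃ n : ℤ, B v l = (n : ℝ))
    (V₁ V₂ : Submodule ℝ V)
    (hcompl : IsCompl V₁ V₂)
    (horth : ∀ v₁ ∈ V₁, ∀ v₂ ∈ V₂, B v₁ v₂ = 0)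
    (hspan1 : Submodule.span ℝ ((Λ ⊓ V₁.toAddSubgroup : AddSubgroup V) : Set V) = V₁)
    (hspan2 : Submodule.span ℝ ((Λ ⊓ V₂.toAddSubgroup : AddSubgroup V) : Set V) = V₂) :
    (fun a : V => ((V₁.linearProjOfIsCompl V₂ hcompl) a : V)) '' (Λ : Set V) =
      (dualLattice B V₁ (Λ ⊓ V₁.toAddSubgroup) : Set V) := by
  classical
  set p1 := V₁.linearProjOfIsCompl V₂ hcompl with hp1def
  set p2 := V₂.linearProjOfIsCompl V₁ hcompl.symm with hp2def
  have hsum : ∀ x : V, (p1 x : V) + (p2 x : V) = x := fun x =>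
    Submodule.projection_add_projection_eq_self hcompl x
  have horth' : ∀ a ∈ V₂, ∀ b ∈ V₁, B a b = 0 := fun a ha b hb => by
    rw [hsymm]; exact horth b hb a ha
  have hpair2 : ∀ (x e : V), e ∈ V₂ → B ((p2 x : V)) e = B x e := by
    intro x e he
    conv_rhs => rw [← hsum x]
    rw [map_add, LinearMap.add_apply, horth _ (p1 x).2 e he, zero_add]
  have hpair1 : ∀ (x e : V), e ∈ V₁ → B ((p1 x : V)) e = B x e := by
    intro x e he
    conv_rhs => rw [← hsum x]
    rw [map_add, LinearMap.add_apply, horth' _ (p2 x).2 e he, add_zero]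
  have hnd2 : ∀ x : V, x ∈ V₂ → (∀ e ∈ V₂, B x e = 0) → x = 0 := by
    intro x hx h
    refine hnondeg x fun y => ?_
    conv_lhs => rw [← hsum y]
    rw [map_add, horth' x hx _ (p1 y).2, zero_add]
    exact h _ (p2 y).2
  -- every linear functional on V₂ is represented by a vector of V₂
  have hrep : ∀ g : V₂ →ₗ[ℝ] ℝ, ∃ w : V₂, ∀ y : V₂, B (w : V) (y : V) = g y := by
    intro g
    let Φ : V₂ →ₗ[ℝ] (Module.Dual ℝ V₂) := B.compl₁₂ V₂.subtype V₂.subtype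
    have hker : ∀ a : V₂, Φ a = 0 → a = 0 := by
      intro a ha
      refine Subtype.ext (hnd2 a a.2 fun e he => ?_)
      have := LinearMap.congr_fun ha ⟨e, he⟩
      simpa [Φ, LinearMap.compl₁₂_apply] using this
    have hinj : Function.Injective Φ :=
      LinearMap.ker_eq_bot.mp (LinearMap.ker_eq_bot'.mpr hker)
    have hsurj : Function.Surjective Φ :=
      (LinearMap.injective_iff_surjective_of_finrank_eq_finrank
        Subspace.dual_finrank_eq.symm).mp hinj
    obtain ⟨w, hw⟩ := hsurj g
    exact ⟨w, fun y => by
      have := LinearMap.congr_fun hw y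
      simpa [Φ, LinearMap.compl₁₂_apply] using this⟩
  -- the projected lattice
  set Lgrp : AddSubgroup V₂ := Λ.map p2.toAddMonoidHom with hLgrp
  set L : Submodule ℤ V₂ := Lgrp.toIntSubmodule with hLdef
  have hmemL : ∀ x : V₂, x ∈ L ↔ ∃ l ∈ Λ, p2 l = x := by
    intro x
    rw [hLdef, ← SetLike.mem_coe, AddSubgroup.coe_toIntSubmodule, SetLike.mem_coe, hLgrp,
      AddSubgroup.mem_map]
    simp only [LinearMap.toAddMonoidHom_coe]
  -- finite spanning subset of Λ ∩ V₂
  obtain ⟨s, hs_sub, hs_sp, hs_li⟩ :=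
    exists_linearIndependent ℝ ((Λ ⊓ V₂.toAddSubgroup : AddSubgroup V) : Set V)
  have hs_spanV2 : Submodule.span ℝ s = V₂ := by rw [hs_sp, hspan2]
  have hs_fin : s.Finite := hs_li.setFinite
  haveI := hs_fin.fintype
  let D : V₂ →ₗ[ℝ] (↑s → ℝ) := LinearMap.pi fun e => (B.flip (e : V)) ∘ₗ V₂.subtype
  have hD_apply : ∀ (x : V₂) (e : ↑s), D x e = B (x : V) (e : V) := fun x e => by
    simp [D, LinearMap.pi_apply]
  have hD_zero : ∀ x : V₂, D x = 0 → x = 0 := by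
    intro x hx
    refine Subtype.ext (hnd2 x x.2 fun e he => ?_)
    have h0 : Submodule.span ℝ s ≤ LinearMap.ker (B (x : V)) := by
      refine Submodule.span_le.mpr fun y hy => ?_
      have := congrFun hx ⟨y, hy⟩
      rw [hD_apply] at this
      simpa [LinearMap.mem_ker] using this
    have : e ∈ Submodule.span ℝ s := by rw [hs_spanV2]; exact he
    exact h0 this
  set Dc := LinearMap.toContinuousLinearMap D with hDc
  have hDbound : ∀ y : V₂, ‖D y‖ ≤ ‖Dc‖ * ‖y‖ := fun y => by
    have := Dc.le_opNorm y
    rwa [hDc, LinearMap.coe_toContinuousLinearMap'] at this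
  have hC1 : (0 : ℝ) < ‖Dc‖ + 1 := by positivity
  haveI hLdisc : DiscreteTopology L := by
    refine discreteTopology_iff_isOpen_singleton_zero.mpr
      ⟨Metric.ball 0 ((‖Dc‖ + 1)⁻¹), Metric.isOpen_ball, ?_⟩
    ext x
    simp only [Set.mem_preimage, mem_ball_zero_iff, Set.mem_singleton_iff]
    constructor
    · intro hx
      obtain ⟨l, hl, hpl⟩ := (hmemL _).mp x.2
      have hints : ∀ e : ↑s, ∃ n : ℤ, D (x : V₂) e = n := by
        intro e
        obtain ⟨n, hn⟩ := hint l hl e (hs_sub e.2).1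
        refine ⟨n, ?_⟩
        rw [hD_apply, ← hpl, hpair2 l _ (hs_sub e.2).2, hn]
      have hDx : D (x : V₂) = 0 := by
        by_contra h
        obtain ⟨e, he⟩ : ∃ e, D (x : V₂) e ≠ 0 := by
          by_contra h'; push_neg at h'; exact h (funext h')
        obtain ⟨n, hn⟩ := hints e
        have hn0 : n ≠ 0 := by rintro rfl; rw [hn] at he; exact he (by norm_num)
        have h1 : (1 : ℝ) ≤ ‖D (x : V₂) e‖ := by
          rw [hn, Real.norm_eq_abs, ← Int.cast_abs]
          exact_mod_cast Int.one_le_abs hn0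
        have h2 : ‖D (x : V₂) e‖ ≤ ‖Dc‖ * ‖(x : V₂)‖ :=
          le_trans (norm_le_pi_norm _ e) (hDbound _)
        have h3 : ‖Dc‖ * ‖(x : V₂)‖ < 1 := by
          calc ‖Dc‖ * ‖(x : V₂)‖ ≤ ‖Dc‖ * (‖Dc‖ + 1)⁻¹ :=
                mul_le_mul_of_nonneg_left hx.le (ContinuousLinearMap.opNorm_nonneg Dc)
            _ < (‖Dc‖ + 1) * (‖Dc‖ + 1)⁻¹ :=
                mul_lt_mul_of_pos_right (lt_add_one _) (by positivity)
            _ = 1 := mul_inv_cancel₀ hC1.ne'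
        linarith [h1.trans h2]
      exact Subtype.ext (hD_zero _ hDx)
    · rintro rfl
      simpa using (by positivity : (0:ℝ) < (‖Dc‖ + 1)⁻¹)
  haveI hLZ : IsZLattice ℝ L := by
    constructor
    rw [eq_top_iff]
    rintro y -
    have hy : (y : V) ∈ Submodule.span ℝ ((Λ ⊓ V₂.toAddSubgroup : AddSubgroup V) : Set V) := by
      rw [hspan2]; exact y.2
    have hmap := Submodule.mem_map_of_mem (f := p2) hy
    rw [Submodule.map_span] at hmap
    have hy2 : p2 (y : V) = y := Submodule.linearProjOfIsCompl_apply_left hcompl.symm y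
    rw [hy2] at hmap
    have hsub2 : p2 '' ((Λ ⊓ V₂.toAddSubgroup : AddSubgroup V) : Set V) ⊆ (L : Set V₂) := by
      rintro _ ⟨l, hl, rfl⟩
      exact (hmemL _).mpr ⟨l, hl.1, rfl⟩
    exact Submodule.span_mono hsub2 hmap
  haveI : Module.Finite ℤ L := ZLattice.module_finite ℝ L
  haveI : Module.Free ℤ L := ZLattice.module_free ℝ L
  set b : Module.Basis (Module.Free.ChooseBasisIndex ℤ L) ℤ L := Module.Free.chooseBasis ℤ L with hb
  set c := b.ofZLatticeBasis ℝ L with hc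
  have hcL : ∀ i, c i ∈ L := fun i => by
    have h := Submodule.subset_span (R := ℤ) (Set.mem_range_self (f := c) i)
    rwa [hc, b.ofZLatticeBasis_span ℝ] at h
  have hpre : ∀ i, ∃ l ∈ Λ, p2 l = c i := fun i => (hmemL _).mp (hcL i)
  choose lam hlamΛ hlamp using hpre
  have hdecomp : ∀ l ∈ Λ, ∃ n : _ →₀ ℤ, (n.sum fun i k => k • c i) = p2 l := by
    intro l hl
    have : p2 l ∈ Submodule.span ℤ (Set.range c) := by
      rw [hc, b.ofZLatticeBasis_span ℝ]
      exact (hmemL _).mpr ⟨l, hl, rfl⟩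
    exact Finsupp.mem_span_range_iff_exists_finsupp.mp this
  ext v
  simp only [Set.mem_image, SetLike.mem_coe]
  constructor
  · rintro ⟨l, hl, rfl⟩
    refine ⟨(p1 l).2, fun e he => ?_⟩
    obtain ⟨he1, he2⟩ := AddSubgroup.mem_inf.mp he
    obtain ⟨n, hn⟩ := hint l hl e he1
    exact ⟨n, by rw [hpair1 l e he2, hn]⟩
  · rintro ⟨hvV₁, hv⟩
    set g : V₂ →ₗ[ℝ] ℝ := c.constr ℝ fun i => -(B v (lam i)) with hg
    obtain ⟨w, hw⟩ := hrep g
    refine ⟨v + (w : V), ?_, ?_⟩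
    · rw [hselfdual]
      intro l hl
      obtain ⟨n, hn⟩ := hdecomp l hl
      set μ := l - n.sum fun i k => k • lam i with hμ
      have hμΛ : μ ∈ Λ := by
        refine AddSubgroup.sub_mem _ hl ?_
        exact sum_mem fun i _ => AddSubgroup.zsmul_mem _ (hlamΛ i) _
      have hμV₁ : μ ∈ V₁ := by
        have hp2μ : p2 μ = 0 := by
          rw [hμ, map_sub, Finsupp.sum, map_sum, sub_eq_zero]
          rw [← hn, Finsupp.sum]
          exact (Finset.sum_congr rfl fun i _ => by rw [map_zsmul, hlamp]).symm
        have := LinearMap.mem_ker.mpr hp2μ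
        exact (Submodule.ker_projectionOnto hcompl.symm).le this
      obtain ⟨m, hm⟩ := hv μ (AddSubgroup.mem_inf.mpr ⟨hμΛ, hμV₁⟩)
      have hBμ : B v μ = B v l - ∑ i ∈ n.support, (n i : ℝ) * B v (lam i) := by
        rw [hμ, map_sub, Finsupp.sum, map_sum]
        congr 1
        exact Finset.sum_congr rfl fun i _ => by rw [map_zsmul, zsmul_eq_mul]
      have h2 : B (w : V) l = g (p2 l) := by
        conv_lhs => rw [← hsum l]
        rw [map_add, horth' _ w.2 _ (p1 l).2, zero_add]
        exact hw (p2 l)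
      have hgval : g (p2 l) = -∑ i ∈ n.support, (n i : ℝ) * B v (lam i) := by
        rw [← hn, Finsupp.sum, map_sum, ← Finset.sum_neg_distrib]
        refine Finset.sum_congr rfl fun i _ => ?_
        rw [map_zsmul, hg, Module.Basis.constr_basis, zsmul_eq_mul]
        ring
      refine ⟨m, ?_⟩
      rw [map_add, LinearMap.add_apply, h2, hgval]
      rw [hBμ] at hm
      linarith
    · show ((p1 (v + (w : V)) : V)) = v
      have h1 : p1 v = ⟨v, hvV₁⟩ :=
        Submodule.linearProjOfIsCompl_apply_left hcompl ⟨v, hvV₁⟩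
      have h2 : p1 (w : V) = 0 :=
        Submodule.linearProjOfIsCompl_apply_right hcompl w
      rw [map_add, h1, h2, add_zero]
end

section
/- Let V be a finite-dimensional real vector space with a nondegenerate symmetric bilinear form B, let Λ be a self-dual integral lattice in V, let V = V₁ ⊕ V₂ be an orthogonal direct-sum decomposition, and set Λᵢ = Λ ∩ Vᵢ; assume each Λᵢ spans Vᵢ over ℝ. Then for every a₁ in the dual lattice Λ₁* (inside V₁), the set S = {a₂ ∈ V₂ : a₁ + a₂ ∈ Λ} is a coset of Λ₂ in V₂: S is nonempty, and for any a₂ ∈ S one has S = {a₂ + λ : λ ∈ Λ₂}. -/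
theorem aux_proj_mem
    {V : Type*} [NormedAddCommGroup V] [NormedSpace ℝ V] [FiniteDimensional ℝ V]
    (B : V →ₗ[ℝ] V →ₗ[ℝ] ℝ)
    (hsymm : ∀ x y, B x y = B y x)
    (hnondeg : ∀ x, (∀ y, B x y = 0) → x = 0)
    (Λ : AddSubgroup V)
    (hdisc : DiscreteTopology Λ)
    (hint : ∀ x ∈ Λ, ∀ y ∈ Λ, ∃ n : ℤ, B x y = (n : ℝ))
    (hselfdual : ∀ v : V, v ∈ Λ ↔ ∀ l ∈ Λ, ∃ n : ℤ, B v l = (n : ℝ))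
    (V₁ V₂ : Submodule ℝ V)
    (hcompl : IsCompl V₁ V₂)
    (horth : ∀ v₁ ∈ V₁, ∀ v₂ ∈ V₂, B v₁ v₂ = 0)
    (hspan1 : Submodule.span ℝ ((Λ ⊓ V₁.toAddSubgroup : AddSubgroup V) : Set V) = V₁)
    (a₁ : V) (ha₁ : a₁ ∈ dualLattice B V₁ (Λ ⊓ V₁.toAddSubgroup)) :
    ∃ l ∈ Λ, (V₁.linearProjOfIsCompl V₂ hcompl l : V) = a₁ := by
  classical
  obtain ⟨ha₁V, ha₁pair⟩ := ha₁
  set proj1 := V₁.linearProjOfIsCompl V₂ hcompl with hproj1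
  -- the complementary part lies in V₂
  have hsub2 : ∀ v : V, v - (proj1 v : V) ∈ V₂ := by
    intro v
    have := Submodule.projection_add_projection_eq_self hcompl v
    have h3 : v - (proj1 v : V) = (V₂.linearProjOfIsCompl V₁ hcompl.symm v : V) :=
      sub_eq_of_eq_add' this.symm
    rw [h3]; exact Submodule.coe_mem _
  -- key: pairing with elements of V₁ only sees the V₁-projection
  have keyA : ∀ y ∈ V₁, ∀ v : V, B y v = B y (proj1 v : V) := by
    intro y hy v
    have : B y (v - (proj1 v : V)) = 0 := horth y hy _ (hsub2 v)
    have h2 : B y v - B y (proj1 v : V) = 0 := by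
      rw [← this]; simp [map_sub]
    linarith
  -- restricted bilinear form on V₁
  set B₁ : V₁ →ₗ[ℝ] V₁ →ₗ[ℝ] ℝ := B.domRestrict₁₂ V₁ V₁ with hB₁def
  have hB₁app : ∀ x y : V₁, B₁ x y = B (x : V) (y : V) := fun x y => rfl
  have hB₁ : LinearMap.BilinForm.Nondegenerate B₁ := by
    refine (LinearMap.IsRefl.nondegenerate_iff_separatingLeft
      (fun x y h => by rw [hB₁app] at h ⊢; rw [hsymm]; exact h)).mpr (fun x hx => ?_)
    have hx0 : (x : V) = 0 := by
      apply hnondeg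
      intro v
      have h1 : B (x : V) v = B (x : V) (proj1 v : V) := keyA _ x.2 v
      have h2 : B₁ x (proj1 v) = 0 := hx _
      rw [h1, ← hB₁app, h2]
    exact Subtype.ext hx0
  have hB₁flip : LinearMap.BilinForm.flip B₁ = B₁ := by
    ext x y
    exact hsymm (y : V) (x : V)
  -- integer lattice structures inside V₁
  set Λℤ : Submodule ℤ V := AddSubgroup.toIntSubmodule Λ with hΛℤ
  set L₁ : Submodule ℤ V₁ := Λℤ.comap ((V₁.subtype).restrictScalars ℤ) with hL₁
  have hL₁mem : ∀ x : V₁, x ∈ L₁ ↔ (x : V) ∈ Λ := fun x => Iff.rfl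
  set P : Submodule ℤ V₁ := Λℤ.map (proj1.restrictScalars ℤ) with hP
  have hL₁P : L₁ ≤ P := by
    intro x hx
    exact ⟨(x : V), hx, Submodule.linearProjOfIsCompl_apply_left hcompl x⟩
  -- L₁ is a ZLattice in V₁
  have hL₁disc : DiscreteTopology L₁ := by
    refine DiscreteTopology.preimage_of_continuous_injective (Λ : Set V) ?_
      (Submodule.injective_subtype V₁)
    exact LinearMap.continuous_of_finiteDimensional _
  have himg : V₁.subtype '' (L₁ : Set V₁) = ((Λ ⊓ V₁.toAddSubgroup : AddSubgroup V) : Set V) := by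
    ext z
    constructor
    · rintro ⟨w, hw, rfl⟩
      exact ⟨hw, w.2⟩
    · rintro ⟨hz1, hz2⟩
      exact ⟨⟨z, hz2⟩, hz1, rfl⟩
  have hL₁span : Submodule.span ℝ (L₁ : Set V₁) = ⊤ := by
    apply Submodule.map_injective_of_injective (Submodule.injective_subtype V₁)
    rw [Submodule.map_span, himg, hspan1, Submodule.map_top, Submodule.range_subtype]
  have hL₁zlat : IsZLattice ℝ L₁ := ⟨hL₁span⟩
  -- basis of L₁ gives a real basis of V₁
  have hfin : Module.Finite ℤ L₁ := ZLattice.module_finite ℝ L₁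
  have hfree : Module.Free ℤ L₁ := ZLattice.module_free ℝ L₁
  set b₁ : Module.Basis (Module.Free.ChooseBasisIndex ℤ L₁) ℤ L₁ := Module.Free.chooseBasis ℤ L₁
  set bE : Module.Basis (Module.Free.ChooseBasisIndex ℤ L₁) ℝ V₁ := b₁.ofZLatticeBasis ℝ L₁
  have hbEspan : Submodule.span ℤ (Set.range bE) = L₁ := b₁.ofZLatticeBasis_span ℝ
  -- P is contained in the dual of L₁, which is discrete
  have hPdual : P ≤ LinearMap.BilinForm.dualSubmodule B₁ L₁ := by
    rintro _ ⟨l, hl, rfl⟩ y hy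
    have h1 : B (y : V) l = B (y : V) (proj1 l : V) := keyA _ y.2 l
    obtain ⟨n, hn⟩ := hint (y : V) ((hL₁mem y).1 hy) l hl
    refine Submodule.mem_one.mpr ⟨n, ?_⟩
    show (algebraMap ℤ ℝ) n = B₁ (proj1 l) y
    have : B₁ (proj1 l) y = B (y : V) (proj1 l : V) := by
      rw [hB₁app]; exact hsymm _ _
    rw [this, ← h1, hn]
    simp
  have hdualEq : LinearMap.BilinForm.dualSubmodule B₁ L₁ =
      Submodule.span ℤ (Set.range (LinearMap.BilinForm.dualBasis B₁ hB₁ bE)) := by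
    have := LinearMap.BilinForm.dualSubmodule_span_of_basis (R := ℤ) B₁ hB₁ bE
    rwa [hbEspan] at this
  have hPdisc : DiscreteTopology P := by
    have : DiscreteTopology (Submodule.span ℤ (Set.range (LinearMap.BilinForm.dualBasis B₁ hB₁ bE))) := by
      infer_instance
    exact DiscreteTopology.of_subset (s := ((Submodule.span ℤ
        (Set.range (LinearMap.BilinForm.dualBasis B₁ hB₁ bE))) : Set V₁)) this (by rw [← hdualEq]; exact hPdual)
  have hPspan : Submodule.span ℝ (P : Set V₁) = ⊤ := by
    apply top_unique
    rw [← hL₁span]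
    exact Submodule.span_mono hL₁P
  have hPzlat : IsZLattice ℝ P := ⟨hPspan⟩
  have hPfree : Module.Free ℤ P := ZLattice.module_free ℝ P
  have hPfin : Module.Finite ℤ P := ZLattice.module_finite ℝ P
  set bP0 : Module.Basis (Module.Free.ChooseBasisIndex ℤ P) ℤ P := Module.Free.chooseBasis ℤ P
  set bP : Module.Basis (Module.Free.ChooseBasisIndex ℤ P) ℝ V₁ := bP0.ofZLatticeBasis ℝ P
  have hbPspan : Submodule.span ℤ (Set.range bP) = P := bP0.ofZLatticeBasis_span ℝ
  -- double duality
  have hdd : LinearMap.BilinForm.dualSubmodule B₁ (LinearMap.BilinForm.dualSubmodule B₁ P) = P := by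
    have := LinearMap.BilinForm.dualSubmodule_dualSubmodule_flip_of_basis (R := ℤ) B₁ hB₁ bP
    rwa [hB₁flip, hbPspan] at this
  -- the dual of P is contained in L₁
  have hstep : LinearMap.BilinForm.dualSubmodule B₁ P ≤ L₁ := by
    intro y hy
    rw [hL₁mem]
    rw [hselfdual]
    intro l hl
    have hmem : proj1 l ∈ P := ⟨l, hl, rfl⟩
    obtain ⟨n, hn⟩ := Submodule.mem_one.mp (hy _ hmem)
    refine ⟨n, ?_⟩
    rw [keyA _ y.2 l, ← hB₁app, ← hn]
    simp
  -- a₁ lies in the dual of L₁, hence in the double dual of P, hence in P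
  have ha₁mem : (⟨a₁, ha₁V⟩ : V₁) ∈ LinearMap.BilinForm.dualSubmodule B₁ (LinearMap.BilinForm.dualSubmodule B₁ P) := by
    intro y hy
    have hyL₁ := hstep hy
    obtain ⟨n, hn⟩ := ha₁pair (y : V) ⟨(hL₁mem y).1 hyL₁, y.2⟩
    exact Submodule.mem_one.mpr ⟨n, by rw [hB₁app, hn]; simp⟩
  rw [hdd] at ha₁mem
  obtain ⟨l, hl, hproj⟩ := ha₁mem
  refine ⟨l, hl, ?_⟩
  rw [show proj1.restrictScalars ℤ l = proj1 l from rfl] at hproj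
  rw [hproj]


/-- If `Λ` is a self-dual integral lattice in a finite-dimensional real vector
space `V` with nondegenerate symmetric bilinear form `B`, and `V = V₁ ⊕ V₂` is an orthogonal
decomposition with `Λᵢ = Λ ∩ Vᵢ` spanning `Vᵢ`, then for every `a₁` in the dual lattice
`Λ₁*` inside `V₁`, the set `S = {a₂ ∈ V₂ : a₁ + a₂ ∈ Λ}` is a coset of `Λ₂` in `V₂`:
it is nonempty and for any `a₂ ∈ S`, `S = a₂ + Λ₂`. -/

theorem selfdual_lattice_fiber_is_coset
    {V : Type*} [NormedAddCommGroup V] [NormedSpace ℝ V] [FiniteDimensional ℝ V]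
    (B : V →ₗ[ℝ] V →ₗ[ℝ] ℝ)
    (hsymm : ∀ x y, B x y = B y x)
    (hnondeg : ∀ x, (∀ y, B x y = 0) → x = 0)
    (Λ : AddSubgroup V)
    (hdisc : DiscreteTopology Λ)
    (hspan : Submodule.span ℝ (Λ : Set V) = ⊤)
    (hint : ∀ x ∈ Λ, ∀ y ∈ Λ, ∃ n : ℤ, B x y = (n : ℝ))
    (hselfdual : ∀ v : V, v ∈ Λ ↔ ∀ l ∈ Λ, ∃ n : ℤ, B v l = (n : ℝ))
    (V₁ V₂ : Submodule ℝ V)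
    (hcompl : IsCompl V₁ V₂)
    (horth : ∀ v₁ ∈ V₁, ∀ v₂ ∈ V₂, B v₁ v₂ = 0)
    (hspan1 : Submodule.span ℝ ((Λ ⊓ V₁.toAddSubgroup : AddSubgroup V) : Set V) = V₁)
    (hspan2 : Submodule.span ℝ ((Λ ⊓ V₂.toAddSubgroup : AddSubgroup V) : Set V) = V₂) :
    ∀ a₁ ∈ dualLattice B V₁ (Λ ⊓ V₁.toAddSubgroup),
      ({a₂ : V | a₂ ∈ V₂ ∧ a₁ + a₂ ∈ Λ}).Nonempty ∧
      ∀ a₂ ∈ {a₂ : V | a₂ ∈ V₂ ∧ a₁ + a₂ ∈ Λ},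
        {a₂' : V | a₂' ∈ V₂ ∧ a₁ + a₂' ∈ Λ} =
          {x : V | ∃ l ∈ (Λ ⊓ V₂.toAddSubgroup : AddSubgroup V), x = a₂ + l} := by

  intro a₁ ha₁
  constructor
  · obtain ⟨l, hl, hproj⟩ := aux_proj_mem B hsymm hnondeg Λ hdisc hint hselfdual V₁ V₂
      hcompl horth hspan1 a₁ ha₁
    refine ⟨l - a₁, ?_, by simpa using hl⟩
    have h2 := Submodule.projection_add_projection_eq_self hcompl l
    have h3 : l - (V₁.linearProjOfIsCompl V₂ hcompl l : V) =
        (V₂.linearProjOfIsCompl V₁ hcompl.symm l : V) := sub_eq_of_eq_add' h2.symm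
    rw [hproj] at h3
    rw [h3]
    exact Submodule.coe_mem _
  · rintro a₂ ⟨ha₂V, ha₂Λ⟩
    ext x
    simp only [Set.mem_setOf_eq]
    constructor
    · rintro ⟨hxV, hxΛ⟩
      refine ⟨x - a₂, ⟨?_, ?_⟩, by abel⟩
      · have : x - a₂ = (a₁ + x) - (a₁ + a₂) := by abel
        rw [this]
        exact Λ.sub_mem hxΛ ha₂Λ
      · exact Submodule.sub_mem V₂ hxV ha₂V
    · rintro ⟨l, ⟨hlΛ, hlV⟩, rfl⟩
      refine ⟨Submodule.add_mem V₂ ha₂V hlV, ?_⟩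
      have : a₁ + (a₂ + l) = (a₁ + a₂) + l := by abel
      rw [this]
      exact Λ.add_mem ha₂Λ hlΛ
end

section
/- Let V be a finite-dimensional real vector space with a nondegenerate symmetric bilinear form B, let Λ be a self-dual integral lattice in V, let V = V₁ ⊕ V₂ be an orthogonal direct-sum decomposition, and set Λᵢ = Λ ∩ Vᵢ; assume each Λᵢ spans Vᵢ over ℝ. Then the index of the subgroup Λ₁ + Λ₂ in Λ equals the order of the discriminant group Λ₁*/Λ₁ (equivalently, of Λ₂*/Λ₂); in particular this index is finite. -/
set_option maxHeartbeats 1000000 in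
theorem aux_selfdual {V : Type*} [NormedAddCommGroup V] [NormedSpace ℝ V] [FiniteDimensional ℝ V]
    (B : V →ₗ[ℝ] V →ₗ[ℝ] ℝ)
    (hsymm : ∀ x y, B x y = B y x)
    (hnondeg : ∀ x, (∀ y, B x y = 0) → x = 0)
    (Λ : AddSubgroup V)
    (hdisc : DiscreteTopology Λ)
    (hspan : Submodule.span ℝ (Λ : Set V) = ⊤)
    (hint : ∀ x ∈ Λ, ∀ y ∈ Λ, ∃ n : ℤ, B x y = (n : ℝ))
    (hselfdual : ∀ v : V, v ∈ Λ ↔ ∀ l ∈ Λ, ∃ n : ℤ, B v l = (n : ℝ))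
    (W₁ W₂ : Submodule ℝ V)
    (hcompl : IsCompl W₁ W₂)
    (horth : ∀ v₁ ∈ W₁, ∀ v₂ ∈ W₂, B v₁ v₂ = 0)
    (hspan1 : Submodule.span ℝ ((Λ ⊓ W₁.toAddSubgroup : AddSubgroup V) : Set V) = W₁) :
    (((Λ ⊓ W₁.toAddSubgroup) ⊔ (Λ ⊓ W₂.toAddSubgroup)).addSubgroupOf Λ).index =
      Nat.card (dualLattice B W₁ (Λ ⊓ W₁.toAddSubgroup) ⧸
        (Λ ⊓ W₁.toAddSubgroup).addSubgroupOf (dualLattice B W₁ (Λ ⊓ W₁.toAddSubgroup))) ∧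
    (((Λ ⊓ W₁.toAddSubgroup) ⊔ (Λ ⊓ W₂.toAddSubgroup)).addSubgroupOf Λ).index ≠ 0 := by
  classical
  set L₁ : AddSubgroup V := Λ ⊓ W₁.toAddSubgroup with hL₁def
  set L₂ : AddSubgroup V := Λ ⊓ W₂.toAddSubgroup with hL₂def
  set D₁ : AddSubgroup V := dualLattice B W₁ L₁ with hD₁def
  -- membership in D₁
  have memD₁ : ∀ v : V, v ∈ D₁ ↔ v ∈ W₁ ∧ ∀ l ∈ L₁, ∃ n : ℤ, B v l = (n : ℝ) := fun v => Iff.rfl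
  -- the projection onto W₁ along W₂
  set p : V →ₗ[ℝ] W₁ := W₁.projectionOnto W₂ hcompl with hpdef
  have hdec : ∀ v : V, ∃ a ∈ W₁, ∃ b ∈ W₂, v = a + b := by
    intro v
    have hv : v ∈ W₁ ⊔ W₂ := by rw [hcompl.sup_eq_top]; trivial
    obtain ⟨a, ha, b, hb, hab⟩ := Submodule.mem_sup.mp hv
    exact ⟨a, ha, b, hb, hab.symm⟩
  have hp_left : ∀ x ∈ W₁, ((p x : V)) = x := fun x hx =>
    congrArg _ (Submodule.linearProjOfIsCompl_apply_left hcompl ⟨x, hx⟩)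
  have hp_right : ∀ x ∈ W₂, p x = 0 := fun x hx =>
    Submodule.projectionOnto_apply_of_mem_right hcompl hx
  have hsub : ∀ v : V, v - (p v : V) ∈ W₂ := by
    intro v
    obtain ⟨a, ha, b, hb, rfl⟩ := hdec v
    have : p (a + b) = ⟨a, ha⟩ := by
      rw [map_add, hp_right b hb, add_zero]
      exact Submodule.linearProjOfIsCompl_apply_left hcompl ⟨a, ha⟩
    rw [this]
    simpa using hb
  -- the restricted bilinear form on W₁
  set Bw : LinearMap.BilinForm ℝ W₁ := B.compl₁₂ W₁.subtype W₁.subtype with hBwdef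
  have hBw_apply : ∀ x y : W₁, Bw x y = B x y := fun x y => rfl
  have hBw : Bw.Nondegenerate := by
    refine (fun hL : LinearMap.SeparatingLeft Bw => ⟨hL, fun y hy => hL y (fun x => by rw [hBw_apply, hsymm, ← hBw_apply]; exact hy x)⟩) ?_
    intro x hx
    have hx0 : (x : V) = 0 := by
      apply hnondeg
      intro y
      obtain ⟨a, ha, b, hb, rfl⟩ := hdec y
      rw [map_add]
      have h1 : B (x : V) a = 0 := hx ⟨a, ha⟩
      have h2 : B (x : V) b = 0 := horth x x.2 b hb
      rw [h1, h2, add_zero]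
    exact Subtype.ext hx0
  have hBwflip : Bw.flip = Bw := by
    apply LinearMap.ext; intro x; apply LinearMap.ext; intro y
    exact hsymm y x
  -- the lattice L₁ as a submodule of W₁
  set N₁ : Submodule ℤ W₁ :=
    AddSubgroup.toIntSubmodule (Λ.comap W₁.subtype.toAddMonoidHom) with hN₁def
  have memN₁ : ∀ x : W₁, x ∈ N₁ ↔ (x : V) ∈ Λ := fun x => Iff.rfl
  have hΛdisc : DiscreteTopology (Λ : Set V) := hdisc
  have hN₁disc : DiscreteTopology N₁ := by
    have := DiscreteTopology.preimage_of_continuous_injective (Λ : Set V)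
      (f := (W₁.subtype : W₁ → V)) continuous_subtype_val Subtype.val_injective
    exact this
  have hN₁span : Submodule.span ℝ (N₁ : Set W₁) = ⊤ := by
    apply Submodule.map_injective_of_injective W₁.injective_subtype
    rw [Submodule.map_span, Submodule.map_top, Submodule.range_subtype]
    have himg : (W₁.subtype '' (N₁ : Set W₁)) = (L₁ : Set V) := by
      ext v
      constructor
      · rintro ⟨x, hx, rfl⟩; exact ⟨hx, x.2⟩
      · rintro ⟨hv, hvW⟩; exact ⟨⟨v, hvW⟩, hv, rfl⟩
    rw [himg, hspan1]
  have hN₁Z : IsZLattice ℝ N₁ := ⟨hN₁span⟩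
  have hN₁free : Module.Free ℤ N₁ := ZLattice.module_free ℝ N₁
  have hN₁fin : Module.Finite ℤ N₁ := ZLattice.module_finite ℝ N₁
  set ι := Module.Free.ChooseBasisIndex ℤ N₁ with hιdef
  have : Fintype ι := Module.Free.ChooseBasisIndex.fintype ℤ N₁
  set b₀ : Module.Basis ι ℤ N₁ := Module.Free.chooseBasis ℤ N₁ with hb₀def
  set b : Module.Basis ι ℝ W₁ := Module.Basis.ofZLatticeBasis ℝ N₁ b₀ with hbdef
  have hbspan : Submodule.span ℤ (Set.range (b : ι → W₁)) = N₁ := b₀.ofZLatticeBasis_span ℝ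
  -- bridge between dualLattice and dualSubmodule
  have hbridge : ∀ x : W₁, ((x : V) ∈ D₁ ↔ x ∈ Bw.dualSubmodule N₁) := by
    intro x
    rw [memD₁]
    constructor
    · rintro ⟨-, h⟩ y hy
      obtain ⟨n, hn⟩ := h (y : V) ⟨hy, y.2⟩
      exact ⟨n, by simpa [hBw_apply] using hn.symm⟩
    · intro h
      refine ⟨x.2, fun l hl => ?_⟩
      obtain ⟨n, hn⟩ := h ⟨l, hl.2⟩ hl.1
      exact ⟨n, by simpa [hBw_apply] using hn.symm⟩
  have hpB : ∀ (x : W₁) (l : V), B (x : V) l = Bw x (p l) := by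
    intro x l
    have h2 : B (x : V) (l - (p l : V)) = 0 := horth _ x.2 _ (hsub l)
    have h3 : B (x : V) ((p l : V) + (l - (p l : V))) = B (x : V) l := by
      rw [add_sub_cancel]
    rw [hBw_apply, ← h3, map_add, h2, add_zero]
  have hBp : ∀ (y : W₁) (l : V), B l (y : V) = Bw (p l) y := by
    intro y l
    rw [hsymm, hpB y l, hBw_apply, hBw_apply, hsymm]
  have hDsub_eq : Bw.dualSubmodule N₁
      = Submodule.span ℤ (Set.range (Bw.dualBasis hBw b : ι → W₁)) := by
    have h := Bw.dualSubmodule_span_of_basis (R := ℤ) hBw b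
    rwa [hbspan] at h
  have hDdisc : DiscreteTopology (Bw.dualSubmodule N₁) := by
    rw [hDsub_eq]; infer_instance
  -- the projected lattice
  set Psub : Submodule ℤ W₁ := AddSubgroup.toIntSubmodule (Λ.map p.toAddMonoidHom) with hPdef
  have memPsub : ∀ x : W₁, x ∈ Psub ↔ ∃ l ∈ Λ, p l = x := fun x => Iff.rfl
  have hPD : Psub ≤ Bw.dualSubmodule N₁ := by
    rintro x hx y hy
    obtain ⟨l, hl, rfl⟩ := (memPsub _).mp hx
    obtain ⟨n, hn⟩ := hint l hl (y : V) ((memN₁ y).mp hy)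
    refine Submodule.mem_one.mpr ⟨n, ?_⟩
    rw [← hBp y l, hn]
    simp
  have hPdisc : DiscreteTopology Psub :=
    DiscreteTopology.of_subset hDdisc (by exact_mod_cast hPD)
  have hPspan : Submodule.span ℝ (Psub : Set W₁) = ⊤ := by
    have h1 : Submodule.map p (Submodule.span ℝ (Λ : Set V)) = ⊤ := by
      rw [hspan, Submodule.map_top, Submodule.linearProjOfIsCompl_range]
    rw [Submodule.map_span] at h1
    refine top_le_iff.mp ?_
    rw [← h1]
    apply Submodule.span_le.mpr
    rintro x ⟨l, hl, rfl⟩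
    exact Submodule.subset_span ((memPsub _).mpr ⟨l, hl, rfl⟩)
  have hPZ : IsZLattice ℝ Psub := ⟨hPspan⟩
  have hPfree : Module.Free ℤ Psub := ZLattice.module_free ℝ Psub
  have hPfin : Module.Finite ℤ Psub := ZLattice.module_finite ℝ Psub
  set κ := Module.Free.ChooseBasisIndex ℤ Psub with hκdef
  have : Fintype κ := Module.Free.ChooseBasisIndex.fintype ℤ Psub
  set c₀ : Module.Basis κ ℤ Psub := Module.Free.chooseBasis ℤ Psub with hc₀def
  set c : Module.Basis κ ℝ W₁ := Module.Basis.ofZLatticeBasis ℝ Psub c₀ with hcdef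
  have hcspan : Submodule.span ℤ (Set.range (c : κ → W₁)) = Psub := c₀.ofZLatticeBasis_span ℝ
  -- the dual of the projected lattice is N₁
  have hdualP : Bw.dualSubmodule Psub = N₁ := by
    ext x
    rw [memN₁]
    constructor
    · intro h
      rw [hselfdual]
      intro l hl
      obtain ⟨n, hn⟩ := Submodule.mem_one.mp (h (p l) ((memPsub _).mpr ⟨l, hl, rfl⟩))
      exact ⟨n, by rw [hpB x l, ← hn]; simp⟩
    · intro h y hy
      obtain ⟨l, hl, rfl⟩ := (memPsub _).mp hy
      obtain ⟨n, hn⟩ := (hselfdual (x : V)).mp h l hl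
      refine Submodule.mem_one.mpr ⟨n, ?_⟩
      rw [← hpB x l, hn]
      simp
  -- the key identity: the dual of N₁ is the projection of Λ
  have key : Bw.dualSubmodule N₁ = Psub := by
    have h := Bw.dualSubmodule_dualSubmodule_flip_of_basis (R := ℤ) hBw c
    rw [hcspan, hBwflip, hdualP] at h
    exact h
  -- integrality of L₁
  have hN₁le : N₁ ≤ Bw.dualSubmodule N₁ := by
    intro x hx y hy
    obtain ⟨n, hn⟩ := hint (x : V) ((memN₁ x).mp hx) (y : V) ((memN₁ y).mp hy)
    refine Submodule.mem_one.mpr ⟨n, ?_⟩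
    rw [hBw_apply, hn]
    simp
  -- membership of projections in D₁ and surjectivity
  have hmemD : ∀ l : V, l ∈ Λ → ((p l : V)) ∈ D₁ := by
    intro l hl
    rw [hbridge (p l), key]
    exact (memPsub _).mpr ⟨l, hl, rfl⟩
  have hsurj' : ∀ v ∈ D₁, ∃ l ∈ Λ, ((p l : V)) = v := by
    intro v hv
    have hx : (⟨v, hv.1⟩ : W₁) ∈ Psub := by
      rw [← key, ← hbridge]
      exact hv
    obtain ⟨l, hl, hpl⟩ := (memPsub _).mp hx
    exact ⟨l, hl, by rw [hpl]⟩
  -- the homomorphism Λ → D₁ ⧸ L₁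
  set ρ : Λ →+ D₁ :=
    { toFun := fun x => ⟨(p (x : V) : V), hmemD (x : V) x.2⟩
      map_zero' := Subtype.ext (by simp)
      map_add' := fun x y => Subtype.ext
        (by simp only [AddSubgroup.coe_add, map_add, Submodule.coe_add]) }
    with hρdef
  set φ := (QuotientAddGroup.mk' (L₁.addSubgroupOf D₁)).comp ρ with hφdef
  have hφsurj : Function.Surjective φ := by
    intro q
    induction q using QuotientAddGroup.induction_on with
    | H d =>
      obtain ⟨l, hl, hpl⟩ := hsurj' (d : V) d.2
      exact ⟨⟨l, hl⟩, congrArg (QuotientAddGroup.mk' (L₁.addSubgroupOf D₁)) (Subtype.ext hpl)⟩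
  have hφker : φ.ker = (L₁ ⊔ L₂).addSubgroupOf Λ := by
    rw [hφdef, ← AddMonoidHom.comap_ker, QuotientAddGroup.ker_mk']
    ext x
    rw [AddSubgroup.mem_comap, AddSubgroup.mem_addSubgroupOf, AddSubgroup.mem_addSubgroupOf]
    show ((p (x : V) : V)) ∈ L₁ ↔ _
    constructor
    · intro h
      refine AddSubgroup.mem_sup.mpr ⟨(p (x : V) : V), h,
        (x : V) - (p (x : V) : V), ⟨AddSubgroup.sub_mem Λ x.2 h.1, hsub (x : V)⟩, ?_⟩
      abel
    · intro h
      obtain ⟨a, ha, bb, hb, habx⟩ := AddSubgroup.mem_sup.mp h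
      have hpx : p (x : V) = ⟨a, ha.2⟩ := by
        rw [← habx, map_add, hp_right bb hb.2, add_zero]
        exact Submodule.linearProjOfIsCompl_apply_left hcompl ⟨a, ha.2⟩
      rw [hpx]
      exact ha
  have hindex : ((L₁ ⊔ L₂).addSubgroupOf Λ).index
      = Nat.card (D₁ ⧸ L₁.addSubgroupOf D₁) := by
    rw [← hφker, AddSubgroup.index_ker, AddMonoidHom.range_eq_top.mpr hφsurj]
    exact Nat.card_congr AddSubgroup.topEquiv.toEquiv
  -- finiteness of the discriminant group
  haveI hQfin : Finite (D₁ ⧸ L₁.addSubgroupOf D₁) := by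
    set S : Set W₁ := ZSpan.fundamentalDomain b ∩ (Bw.dualSubmodule N₁ : Set W₁) with hSdef
    have hSfin : S.Finite := by
      haveI : DiscreteTopology ((Bw.dualSubmodule N₁ : Set W₁)) := hDdisc
      refine Metric.finite_isBounded_inter_isClosed DiscreteTopology.isDiscrete (ZSpan.fundamentalDomain_isBounded b) ?_
      haveI : DiscreteTopology ((Bw.dualSubmodule N₁).toAddSubgroup) := hDdisc
      exact AddSubgroup.isClosed_of_discrete (H := (Bw.dualSubmodule N₁).toAddSubgroup)
    let toW : D₁ → W₁ := fun d => ⟨(d : V), d.2.1⟩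
    have htoW_mem : ∀ d : D₁, toW d ∈ Bw.dualSubmodule N₁ := fun d => (hbridge _).mp d.2
    let f : D₁ → W₁ := fun d => ZSpan.fract b (toW d)
    have hf_eq : ∀ d d' : D₁, (-d + d' : D₁) ∈ L₁.addSubgroupOf D₁ → f d = f d' := by
      intro d d' h
      have hmem : toW d' - toW d ∈ Submodule.span ℤ (Set.range (b : ι → W₁)) := by
        rw [hbspan, memN₁]
        have hc : ((toW d' - toW d : W₁) : V) = ((-d + d' : D₁) : V) := by
          simp only [Submodule.coe_sub, AddSubgroup.coe_add, AddSubgroup.coe_neg]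
          exact sub_eq_neg_add _ _
        rw [hc]
        exact (AddSubgroup.mem_addSubgroupOf.mp h).1
      have hsum : toW d' = toW d + (toW d' - toW d) := by abel
      show ZSpan.fract b (toW d) = ZSpan.fract b (toW d')
      rw [hsum, ZSpan.fract_add_ZSpan b _ hmem]
    have hf_inj : ∀ d d' : D₁, f d = f d' → (-d + d' : D₁) ∈ L₁.addSubgroupOf D₁ := by
      intro d d' hfd
      have h := (ZSpan.fract_eq_fract b (toW d) (toW d')).mp hfd
      rw [hbspan, memN₁] at h
      rw [AddSubgroup.mem_addSubgroupOf]
      have hc : ((-(toW d) + toW d' : W₁) : V) = ((-d + d' : D₁) : V) := by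
        simp only [Submodule.coe_add, Submodule.coe_neg, AddSubgroup.coe_add, AddSubgroup.coe_neg]
        rfl
      rw [hc] at h
      exact ⟨h, (-d + d' : D₁).2.1⟩
    have hf_mem : ∀ d : D₁, f d ∈ S := by
      intro d
      refine ⟨ZSpan.fract_mem_fundamentalDomain b _, ?_⟩
      show toW d - (ZSpan.floor b (toW d) : W₁) ∈ Bw.dualSubmodule N₁
      refine Submodule.sub_mem _ (htoW_mem d) ?_
      have hfl : ((ZSpan.floor b (toW d) : W₁)) ∈ N₁ := by
        rw [← hbspan]
        exact (ZSpan.floor b (toW d)).2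
      exact hN₁le hfl
    let g : (D₁ ⧸ L₁.addSubgroupOf D₁) → W₁ :=
      fun q => Quotient.liftOn' q f
        (fun d d' h => hf_eq d d' (QuotientAddGroup.leftRel_apply.mp h))
    have hg_inj : Function.Injective g := by
      intro q q'
      induction q using QuotientAddGroup.induction_on with
      | H d =>
        induction q' using QuotientAddGroup.induction_on with
        | H d' =>
          intro h
          exact (QuotientAddGroup.eq (s := L₁.addSubgroupOf D₁)).mpr (hf_inj d d' h)
    have hg_mem : ∀ q, g q ∈ S := by
      intro q
      induction q using QuotientAddGroup.induction_on with
      | H d => exact hf_mem d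
    haveI := hSfin.to_subtype
    exact Finite.of_injective (fun q => (⟨g q, hg_mem q⟩ : S))
      (fun q q' h => hg_inj (congrArg Subtype.val h))
  have hcard_ne : Nat.card (D₁ ⧸ L₁.addSubgroupOf D₁) ≠ 0 :=
    Nat.card_ne_zero.mpr ⟨⟨0⟩, hQfin⟩
  exact ⟨hindex, by rw [hindex]; exact hcard_ne⟩

/-- If `Λ` is a self-dual integral lattice in a finite-dimensional real vector
space `V` with nondegenerate symmetric bilinear form `B`, and `V = V₁ ⊕ V₂` is an orthogonal
decomposition with `Λᵢ = Λ ∩ Vᵢ` spanning `Vᵢ`, then the index of `Λ₁ + Λ₂` in `Λ` equals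
the order of the discriminant group `Λ₁*/Λ₁` (equivalently, of `Λ₂*/Λ₂`); in particular
this index is finite (nonzero). -/
theorem selfdual_lattice_index_eq_discriminant_order
    {V : Type*} [NormedAddCommGroup V] [NormedSpace ℝ V] [FiniteDimensional ℝ V]
    (B : V →ₗ[ℝ] V →ₗ[ℝ] ℝ)
    (hsymm : ∀ x y, B x y = B y x)
    (hnondeg : ∀ x, (∀ y, B x y = 0) → x = 0)
    (Λ : AddSubgroup V)
    (hdisc : DiscreteTopology Λ)
    (hspan : Submodule.span ℝ (Λ : Set V) = ⊤)
    (hint : ∀ x ∈ Λ, ∀ y ∈ Λ, ∃ n : ℤ, B x y = (n : ℝ))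
    (hselfdual : ∀ v : V, v ∈ Λ ↔ ∀ l ∈ Λ, ∃ n : ℤ, B v l = (n : ℝ))
    (V₁ V₂ : Submodule ℝ V)
    (hcompl : IsCompl V₁ V₂)
    (horth : ∀ v₁ ∈ V₁, ∀ v₂ ∈ V₂, B v₁ v₂ = 0)
    (hspan1 : Submodule.span ℝ ((Λ ⊓ V₁.toAddSubgroup : AddSubgroup V) : Set V) = V₁)
    (hspan2 : Submodule.span ℝ ((Λ ⊓ V₂.toAddSubgroup : AddSubgroup V) : Set V) = V₂) :
    (((Λ ⊓ V₁.toAddSubgroup) ⊔ (Λ ⊓ V₂.toAddSubgroup)).addSubgroupOf Λ).index =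
      Nat.card (dualLattice B V₁ (Λ ⊓ V₁.toAddSubgroup) ⧸
        (Λ ⊓ V₁.toAddSubgroup).addSubgroupOf (dualLattice B V₁ (Λ ⊓ V₁.toAddSubgroup))) ∧
    (((Λ ⊓ V₁.toAddSubgroup) ⊔ (Λ ⊓ V₂.toAddSubgroup)).addSubgroupOf Λ).index =
      Nat.card (dualLattice B V₂ (Λ ⊓ V₂.toAddSubgroup) ⧸
        (Λ ⊓ V₂.toAddSubgroup).addSubgroupOf (dualLattice B V₂ (Λ ⊓ V₂.toAddSubgroup))) ∧
    (((Λ ⊓ V₁.toAddSubgroup) ⊔ (Λ ⊓ V₂.toAddSubgroup)).addSubgroupOf Λ).index ≠ 0 := by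
  have h1 := aux_selfdual B hsymm hnondeg Λ hdisc hspan hint hselfdual V₁ V₂ hcompl horth hspan1
  have h2 := aux_selfdual B hsymm hnondeg Λ hdisc hspan hint hselfdual V₂ V₁ hcompl.symm
    (fun v₂ h₂ v₁ h₁ => by rw [hsymm]; exact horth v₁ h₁ v₂ h₂) hspan2
  rw [sup_comm (Λ ⊓ V₂.toAddSubgroup) (Λ ⊓ V₁.toAddSubgroup)] at h2
  exact ⟨h1.1, h2.1, h1.2⟩
end

section
/- Let G be a finite abelian group and let B : G × G → ℚ/ℤ be a biadditive pairing that is alternating (B(g,g) = 0 for all g ∈ G) and nondegenerate (if B(g,h) = 0 for all h ∈ G then g = 0). Then the order of G is a perfect square: there exists a natural number n with |G| = n². -/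
set_option maxHeartbeats 1000000

open AddSubgroup

section Aux

private lemma qz_order_inv (e : ℕ) (he : 0 < e) :
    addOrderOf ((((1:ℚ) / (e:ℚ)) : ℚ) : ℚ ⧸ AddSubgroup.zmultiples (1 : ℚ)) = e := by
  haveI : Fact ((0:ℚ) < 1) := ⟨one_pos⟩
  exact AddCircle.addOrderOf_period_div (p := (1:ℚ)) he

private lemma qz_mem_zmultiples_of_nsmul_eq_zero (e : ℕ) (he : 0 < e)
    (q : ℚ ⧸ AddSubgroup.zmultiples (1 : ℚ)) (hq : e • q = 0) :
    q ∈ zmultiples ((((1:ℚ) / (e:ℚ)) : ℚ) : ℚ ⧸ AddSubgroup.zmultiples (1 : ℚ)) := by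
  obtain ⟨r, rfl⟩ := QuotientAddGroup.mk_surjective q
  have h1 : ((e • r : ℚ) : ℚ ⧸ AddSubgroup.zmultiples (1 : ℚ)) = 0 := by
    rw [← hq]; rfl
  rw [QuotientAddGroup.eq_zero_iff] at h1
  obtain ⟨k, hk⟩ := mem_zmultiples_iff.mp h1
  refine mem_zmultiples_iff.mpr ⟨k, ?_⟩
  have he' : (e:ℚ) ≠ 0 := by positivity
  have : k • ((1:ℚ) / (e:ℚ)) = r := by
    have hk' : (k:ℚ) = (e:ℚ) * r := by
      have h2 := hk
      push_cast [zsmul_eq_mul, nsmul_eq_mul] at h2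
      linarith
    rw [zsmul_eq_mul]
    field_simp [hk']
    linarith
  calc k • (((((1:ℚ) / (e:ℚ)) : ℚ) : ℚ ⧸ AddSubgroup.zmultiples (1 : ℚ)))
      = ((k • ((1:ℚ) / (e:ℚ)) : ℚ) : ℚ ⧸ AddSubgroup.zmultiples (1 : ℚ)) := by
        rw [QuotientAddGroup.mk_zsmul]
    _ = ((r : ℚ) : ℚ ⧸ AddSubgroup.zmultiples (1 : ℚ)) := by rw [this]

private lemma zmultiples_isAddCyclic {A : Type*} [AddCommGroup A] (a : A) :
    IsAddCyclic ↥(zmultiples a) := by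
  refine ⟨⟨⟨a, mem_zmultiples a⟩, ?_⟩⟩
  rintro ⟨x, hx⟩
  obtain ⟨k, hk⟩ := mem_zmultiples_iff.mp hx
  exact ⟨k, by ext; simpa using hk⟩

private lemma zmultiples_eq_of_mem_of_orderOf_eq {A : Type*} [AddCommGroup A] {c τ : A}
    (h : c ∈ zmultiples τ) (hord : addOrderOf c = addOrderOf τ) (hpos : 0 < addOrderOf τ) :
    zmultiples c = zmultiples τ := by
  have hle : zmultiples c ≤ zmultiples τ := by
    rintro _ ⟨k, rfl⟩; exact zsmul_mem h k
  have hfin : (zmultiples τ : Set A).Finite := by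
    have : 0 < Nat.card ↥(zmultiples τ) := by rw [Nat.card_zmultiples]; exact hpos
    have := (Nat.card_pos_iff.mp this).2
    exact (zmultiples τ : Set A).toFinite
  apply SetLike.coe_injective
  apply Set.eq_of_subset_of_ncard_le hle ?_ hfin
  rw [← Nat.card_coe_set_eq, ← Nat.card_coe_set_eq]
  show Nat.card ↥(zmultiples τ) ≤ Nat.card ↥(zmultiples c)
  rw [Nat.card_zmultiples, Nat.card_zmultiples, hord]

private lemma card_sup_of_inf_eq_bot {G : Type*} [AddCommGroup G] {H K : AddSubgroup G}
    (h : H ⊓ K = ⊥) : Nat.card ↥(H ⊔ K) = Nat.card H * Nat.card K := by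
  have hbij : Function.Bijective
      (fun p : H × K => (⟨(p.1 : G) + p.2, add_mem_sup p.1.2 p.2.2⟩ : ↥(H ⊔ K))) := by
    constructor
    · rintro ⟨p1, p2⟩ ⟨q1, q2⟩ hab
      have h1 : (p1:G) + p2 = q1 + q2 := congrArg Subtype.val hab
      have h2 : (p1:G) - q1 = (q2:G) - p2 := by
        rw [sub_eq_sub_iff_add_eq_add, h1]; abel
      have h3 : (p1:G) - q1 ∈ H ⊓ K := by
        constructor
        · exact AddSubgroup.sub_mem H p1.2 q1.2
        · rw [h2]; exact AddSubgroup.sub_mem K q2.2 p2.2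
      rw [h] at h3
      have h4 : (p1:G) = q1 := sub_eq_zero.mp (AddSubgroup.mem_bot.mp h3)
      have h5 : (p2:G) = q2 := by
        have h6 : (q2:G) - p2 = 0 := by rw [← h2, h4, sub_self]
        exact (sub_eq_zero.mp h6).symm
      exact Prod.ext (Subtype.ext h4) (Subtype.ext h5)
    · rintro ⟨g, hg⟩
      obtain ⟨u, hu, v, hv, huv⟩ := AddSubgroup.mem_sup.mp hg
      exact ⟨(⟨u, hu⟩, ⟨v, hv⟩), by simpa using huv⟩
  rw [← Nat.card_prod]
  exact (Nat.card_congr (Equiv.ofBijective _ hbij)).symm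

private theorem aux : ∀ (N : ℕ) {G : Type*} [AddCommGroup G] [Finite G]
    (B : G → G → ℚ ⧸ AddSubgroup.zmultiples (1 : ℚ)),
    (∀ g₁ g₂ h, B (g₁ + g₂) h = B g₁ h + B g₂ h) →
    (∀ g h₁ h₂, B g (h₁ + h₂) = B g h₁ + B g h₂) →
    (∀ g, B g g = 0) →
    (∀ g, (∀ h, B g h = 0) → g = 0) →
    Nat.card G = N → ∃ n : ℕ, N = n ^ 2 := by
  intro N
  induction N using Nat.strong_induction_on with
  | _ N ih =>
  intro G _ _ B haddL haddR halt hnondeg hN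
  by_cases htriv : ∀ g : G, g = 0
  · refine ⟨1, ?_⟩
    rw [← hN]
    have h1 : Nat.card G = 1 := Nat.card_eq_one_iff_unique.mpr
      ⟨⟨fun a b => (htriv a).trans (htriv b).symm⟩, ⟨0⟩⟩
    rw [h1]; norm_num
  push_neg at htriv
  obtain ⟨g₀, hg₀⟩ := htriv
  haveI : Nontrivial G := ⟨⟨g₀, 0, hg₀⟩⟩
  -- bundle the pairing
  set Bh : G →+ G →+ (ℚ ⧸ AddSubgroup.zmultiples (1 : ℚ)) :=
    AddMonoidHom.mk' (fun g => AddMonoidHom.mk' (B g) (fun h₁ h₂ => haddR g h₁ h₂))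
      (fun g₁ g₂ => AddMonoidHom.ext fun h => haddL g₁ g₂ h) with hBh
  have hLz : ∀ (n : ℤ) (g h : G), B (n • g) h = n • B g h := by
    intro n g h
    have := DFunLike.congr_fun (map_zsmul Bh n g) h
    simpa [hBh] using this
  have hRz : ∀ (n : ℤ) (g h : G), B g (n • h) = n • B g h := by
    intro n g h
    exact map_zsmul (Bh g) n h
  have hLn : ∀ (n : ℕ) (g h : G), B (n • g) h = n • B g h := by
    intro n g h
    have := hLz n g h
    simpa [natCast_zsmul] using this
  have hRn : ∀ (n : ℕ) (g h : G), B g (n • h) = n • B g h := by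
    intro n g h
    have := hRz n g h
    simpa [natCast_zsmul] using this
  have hR0 : ∀ g : G, B g 0 = 0 := fun g => map_zero (Bh g)
  have hL0 : ∀ h : G, B 0 h = 0 := fun h => by
    have := DFunLike.congr_fun (map_zero Bh) h
    simpa [hBh] using this
  have hskew : ∀ g h : G, B h g = - B g h := by
    intro g h
    have h0 := halt (g + h)
    rw [haddL, haddR, haddR, halt, halt] at h0
    rw [zero_add, add_zero] at h0
    exact eq_neg_of_add_eq_zero_right h0
  -- exponent
  have hEE : AddMonoid.ExponentExists G := AddMonoid.ExponentExists.of_finite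
  set e := AddMonoid.exponent G with he_def
  obtain ⟨x, hx⟩ := AddMonoid.exists_addOrderOf_eq_exponent hEE
  have hesmul : ∀ g : G, e • g = 0 := fun g => AddMonoid.exponent_nsmul_eq_zero g
  have he1 : 1 < e := AddMonoid.one_lt_exponent
  have he0 : 0 < e := by omega
  have hkill : ∀ g h : G, e • B g h = 0 := by
    intro g h
    rw [← hLn, hesmul, hL0]
  set τ : ℚ ⧸ AddSubgroup.zmultiples (1 : ℚ) :=
    ((((1:ℚ) / (e:ℚ)) : ℚ) : ℚ ⧸ AddSubgroup.zmultiples (1 : ℚ)) with hτdef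
  have hτ : addOrderOf τ = e := qz_order_inv e he0
  -- the image of pairing against x is cyclic
  set C := (Bh x).range with hC
  have hCT : C ≤ zmultiples τ := by
    rintro _ ⟨h, rfl⟩
    exact qz_mem_zmultiples_of_nsmul_eq_zero e he0 _ (hkill x h)
  haveI : IsAddCyclic ↥(zmultiples τ) := zmultiples_isAddCyclic τ
  haveI hcyc : IsAddCyclic ↥C := AddSubgroup.isAddCyclic_of_le hCT
  obtain ⟨⟨c, hcC⟩, hgen⟩ := hcyc.exists_generator
  have hc_vals : ∀ h : G, ∃ k : ℤ, B x h = k • c := by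
    intro h
    obtain ⟨k, hk⟩ := hgen ⟨B x h, ⟨h, rfl⟩⟩
    refine ⟨k, ?_⟩
    have := congrArg Subtype.val hk
    simpa using this.symm
  have hNc_kill : ∀ h : G, (addOrderOf c) • B x h = 0 := by
    intro h
    obtain ⟨k, hk⟩ := hc_vals h
    rw [hk]
    calc addOrderOf c • (k • c) = k • (addOrderOf c • c) := smul_comm _ _ _
    _ = k • (0 : ℚ ⧸ AddSubgroup.zmultiples (1 : ℚ)) := by rw [addOrderOf_nsmul_eq_zero]
    _ = 0 := smul_zero k
  have heNc : e ∣ addOrderOf c := by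
    have hx0 : (addOrderOf c) • x = 0 := by
      apply hnondeg
      intro h
      rw [hLn, hNc_kill]
    have := addOrderOf_dvd_of_nsmul_eq_zero hx0
    rwa [hx] at this
  obtain ⟨y, hy⟩ := hcC
  have hy' : B x y = c := hy
  have hNce : addOrderOf c ∣ e := addOrderOf_dvd_of_nsmul_eq_zero (by rw [← hy', hkill])
  have hcord : addOrderOf c = e := Nat.dvd_antisymm hNce heNc
  have hyord : addOrderOf y = e := by
    apply Nat.dvd_antisymm (addOrderOf_dvd_of_nsmul_eq_zero (hesmul y))
    rw [← hcord]
    apply addOrderOf_dvd_of_nsmul_eq_zero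
    rw [← hy', ← hRn, addOrderOf_nsmul_eq_zero, hR0]
  -- everything killed by e is a multiple of c
  have hmemc : ∀ q : ℚ ⧸ AddSubgroup.zmultiples (1 : ℚ), e • q = 0 → q ∈ zmultiples c := by
    intro q hq
    have heq : zmultiples c = zmultiples τ := by
      apply zmultiples_eq_of_mem_of_orderOf_eq
      · exact qz_mem_zmultiples_of_nsmul_eq_zero e he0 c (by rw [← hy', hkill])
      · rw [hcord, hτ]
      · rw [hτ]; exact he0
    rw [heq]
    exact qz_mem_zmultiples_of_nsmul_eq_zero e he0 q hq
  -- divisibility tool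
  have hzsmul_zero : ∀ (a : ℤ) (g : G), addOrderOf g = e → a • c = 0 → a • g = 0 := by
    intro a g hg hac
    have : (e:ℤ) ∣ a := by
      rw [← hcord]
      exact addOrderOf_dvd_iff_zsmul_eq_zero.mpr hac
    obtain ⟨m, rfl⟩ := this
    rw [mul_smul, natCast_zsmul, hesmul]
  have hBxx : B x x = 0 := halt x
  have hByy : B y y = 0 := halt y
  have hByx : B y x = -c := by rw [hskew, hy']
  -- subgroups
  set H : AddSubgroup G := zmultiples x ⊔ zmultiples y with hHdef
  set K : AddSubgroup G := (Bh x).ker ⊓ (Bh y).ker with hKdef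
  have hmemK : ∀ g : G, g ∈ K ↔ B x g = 0 ∧ B y g = 0 := by
    intro g
    simp [hKdef, AddMonoidHom.mem_ker, hBh]
  have hxyinf : zmultiples x ⊓ zmultiples y = ⊥ := by
    rw [eq_bot_iff]
    rintro g ⟨hgx, hgy⟩
    obtain ⟨a, ha⟩ := mem_zmultiples_iff.mp hgx
    obtain ⟨b, hb⟩ := mem_zmultiples_iff.mp hgy
    have h1 : b • c = 0 := by
      rw [← hy', ← hRz, hb, ← ha, hRz, hBxx, smul_zero]
    rw [AddSubgroup.mem_bot, ← hb]
    exact hzsmul_zero b y hyord h1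
  have hHcard : Nat.card ↥H = e * e := by
    rw [hHdef, card_sup_of_inf_eq_bot hxyinf, Nat.card_zmultiples, Nat.card_zmultiples, hx, hyord]
  have hHK : H ⊓ K = ⊥ := by
    rw [eq_bot_iff]
    rintro g ⟨hgH, hgK⟩
    obtain ⟨hg1, hg2⟩ := (hmemK g).mp hgK
    obtain ⟨u, hu, v, hv, huv⟩ := AddSubgroup.mem_sup.mp hgH
    obtain ⟨a, ha⟩ := mem_zmultiples_iff.mp hu
    obtain ⟨b, hb⟩ := mem_zmultiples_iff.mp hv
    have hgab : g = a • x + b • y := by rw [ha, hb, huv]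
    have h1 : b • c = 0 := by
      have := hg1
      rw [hgab, haddR, hRz, hRz, hBxx, smul_zero, zero_add, hy'] at this
      exact this
    have hb0 : b • y = 0 := hzsmul_zero b y hyord h1
    have h2 : -(a • c) = 0 := by
      have := hg2
      rw [hgab, haddR, hRz, hRz, hByx, hByy, smul_zero, add_zero, smul_neg] at this
      exact this
    have ha0 : a • x = 0 := hzsmul_zero a x hx (by rwa [neg_eq_zero] at h2)
    rw [AddSubgroup.mem_bot, hgab, ha0, hb0, add_zero]
  have hsup : H ⊔ K = ⊤ := by
    rw [eq_top_iff]
    intro g _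
    obtain ⟨a, ha⟩ := mem_zmultiples_iff.mp (hmemc (B x g) (hkill x g))
    obtain ⟨b, hb⟩ := mem_zmultiples_iff.mp (hmemc (B y g) (hkill y g))
    set u : G := (-b) • x + a • y with hu
    set k : G := g - u with hk
    have hkK : k ∈ K := by
      rw [hmemK]
      constructor
      · have : B x k = B x g - B x u := by
          rw [hk]
          exact map_sub (Bh x) g u
        rw [this, hu, haddR, hRz, hRz, hBxx, smul_zero, zero_add, hy', ha, sub_self]
      · have : B y k = B y g - B y u := by
          rw [hk]
          exact map_sub (Bh y) g u
        rw [this, hu, haddR, hRz, hRz, hByx, hByy, smul_zero, add_zero, ← hb]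
        simp
    have huH : u ∈ H := by
      rw [hHdef]
      exact AddSubgroup.add_mem _
        (AddSubgroup.mem_sup_left (zsmul_mem (mem_zmultiples x) (-b)))
        (AddSubgroup.mem_sup_right (zsmul_mem (mem_zmultiples y) a))
    exact AddSubgroup.mem_sup.mpr ⟨u, huH, k, hkK, by rw [hk]; abel⟩
  have hcardG : Nat.card G = (e * e) * Nat.card ↥K := by
    have h1 := card_sup_of_inf_eq_bot hHK
    rw [hsup] at h1
    have h2 : Nat.card ↥(⊤ : AddSubgroup G) = Nat.card G :=
      Nat.card_congr AddSubgroup.topEquiv.toEquiv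
    rw [h2, hHcard] at h1
    rw [h1]
  -- restricted pairing on K
  clear_value K H
  haveI : Nonempty ↥K := ⟨⟨0, K.zero_mem⟩⟩
  have hKpos : 0 < Nat.card ↥K := Nat.card_pos
  have hKlt : Nat.card ↥K < N := by
    rw [← hN, hcardG]
    have h4 : 1 < e * e := lt_of_lt_of_le he1 (Nat.le_mul_of_pos_right e he0)
    exact (lt_mul_iff_one_lt_left hKpos).mpr h4
  obtain ⟨m, hm⟩ := ih (Nat.card ↥K) hKlt (fun p q : ↥K => B ↑p ↑q)
    (fun p₁ p₂ q => haddL ↑p₁ ↑p₂ ↑q)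
    (fun p q₁ q₂ => haddR ↑p ↑q₁ ↑q₂)
    (fun p => halt ↑p)
    (by
      rintro ⟨k, hk⟩ hall
      obtain ⟨hk1, hk2⟩ := (hmemK k).mp hk
      have hkx : B k x = 0 := by rw [hskew, hk1, neg_zero]
      have hky : B k y = 0 := by rw [hskew, hk2, neg_zero]
      have : k = 0 := by
        apply hnondeg
        intro g
        have hgtop : g ∈ H ⊔ K := by rw [hsup]; trivial
        obtain ⟨u, hu, v, hv, huv⟩ := AddSubgroup.mem_sup.mp hgtop
        rw [hHdef] at hu
        obtain ⟨p, hp, q, hq, hpq⟩ := AddSubgroup.mem_sup.mp hu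
        obtain ⟨a, ha⟩ := mem_zmultiples_iff.mp hp
        obtain ⟨b, hb⟩ := mem_zmultiples_iff.mp hq
        have : g = a • x + b • y + v := by rw [ha, hb, hpq, huv]
        rw [this, haddR, haddR, hRz, hRz, hkx, hky, smul_zero, smul_zero, add_zero, zero_add]
        exact hall ⟨v, hv⟩
      exact Subtype.ext this)
    rfl
  refine ⟨e * m, ?_⟩
  rw [← hN, hcardG, hm]
  ring

end Aux

/-- A finite abelian group carrying a biadditive, alternating, nondegenerate
pairing valued in `ℚ/ℤ` has order a perfect square. -/
theorem order_square_of_nondeg_alternating_pairing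
    {G : Type*} [AddCommGroup G] [Finite G]
    (B : G → G → ℚ ⧸ AddSubgroup.zmultiples (1 : ℚ))
    (haddL : ∀ g₁ g₂ h, B (g₁ + g₂) h = B g₁ h + B g₂ h)
    (haddR : ∀ g h₁ h₂, B g (h₁ + h₂) = B g h₁ + B g h₂)
    (halt : ∀ g, B g g = 0)
    (hnondeg : ∀ g, (∀ h, B g h = 0) → g = 0) :
    ∃ n : ℕ, Nat.card G = n ^ 2 :=
  aux (Nat.card G) B haddL haddR halt hnondeg rfl
end

section
/- Let H be a finite abelian group and let B : H × H → ℚ/ℤ be a biadditive pairing that is alternating (B(h,h) = 0 for all h) and nondegenerate (B(g,h) = 0 for all h implies g = 0). Let C ≤ H be a subgroup whose annihilator C^⊥ = {h ∈ H : B(h,c) = 0 for all c ∈ C} satisfies C^⊥ ⊆ C. Then the index of C^⊥ in C is a perfect square: there exists a natural number m with |C| = m² · |C^⊥|. (The pairing B descends to a nondegenerate alternating pairing on C/C^⊥.) -/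
open AddSubgroup

namespace IAS15

noncomputable section

abbrev QZ := ℚ ⧸ AddSubgroup.zmultiples (1 : ℚ)

def π : ℚ →+ QZ := QuotientAddGroup.mk' _

lemma pi_surj : Function.Surjective π := QuotientAddGroup.mk'_surjective _

lemma pi_eq_zero (q : ℚ) : π q = 0 ↔ ∃ k : ℤ, (k : ℚ) = q := by
  rw [show π q = QuotientAddGroup.mk q from rfl, QuotientAddGroup.eq_zero_iff,
    AddSubgroup.mem_zmultiples_iff]
  simp [zsmul_eq_mul]

lemma torsion_mem (n : ℕ) (hn : 0 < n) (ξ : QZ) (h : n • ξ = 0) :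
    ξ ∈ zmultiples (π ((n : ℚ)⁻¹)) := by
  obtain ⟨q, rfl⟩ := pi_surj ξ
  rw [← map_nsmul, pi_eq_zero] at h
  obtain ⟨k, hk⟩ := h
  have hq : q = k • ((n : ℚ)⁻¹) := by
    have hn' : (n : ℚ) ≠ 0 := by positivity
    field_simp [zsmul_eq_mul]
    rw [zsmul_eq_mul, mul_one_div, eq_div_iff hn', mul_comm]
    rw [nsmul_eq_mul] at hk
    linarith [hk]
  rw [hq, map_zsmul]
  exact zsmul_mem (mem_zmultiples _) _

lemma addOrderOf_g (n : ℕ) (hn : 0 < n) : addOrderOf (π ((n : ℚ)⁻¹)) = n := by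
  rw [addOrderOf_eq_iff hn]
  constructor
  · rw [← map_nsmul, pi_eq_zero]
    exact ⟨1, by rw [nsmul_eq_mul, mul_inv_cancel₀ (by positivity)]; simp⟩
  · intro m hmn hm0 hcon
    rw [← map_nsmul, pi_eq_zero] at hcon
    obtain ⟨k, hk⟩ := hcon
    rw [nsmul_eq_mul] at hk
    have hn' : (0:ℚ) < (n:ℚ) := by positivity
    have hmq : (k : ℚ) * n = m := by field_simp at hk; linarith
    have hm' : (0:ℚ) < m := by exact_mod_cast hm0
    have hkq : (0:ℚ) < k := by nlinarith
    have hk1 : (1:ℚ) ≤ k := by exact_mod_cast (show (0:ℤ) < k by exact_mod_cast hkq)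
    have hmn' : (m:ℚ) < n := by exact_mod_cast hmn
    nlinarith

lemma card_sup_of_disjoint {Q : Type*} [AddCommGroup Q] (A B : AddSubgroup Q)
    (h : A ⊓ B = ⊥) : Nat.card ↥(A ⊔ B) = Nat.card A * Nat.card B := by
  let f : A × B →+ Q := AddMonoidHom.mk' (fun p => (p.1 : Q) + (p.2 : Q)) (by
    rintro ⟨a, b⟩ ⟨c, d⟩
    simp only [Prod.fst_add, Prod.snd_add, AddSubgroup.coe_add]
    abel)
  have hinj : Function.Injective f := by
    rw [injective_iff_map_eq_zero]
    rintro ⟨a, b⟩ hab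
    have hab' : (a : Q) + (b : Q) = 0 := hab
    have ha : (a : Q) ∈ A ⊓ B := by
      refine ⟨a.2, ?_⟩
      have : (a : Q) = -(b : Q) := by
        rw [eq_neg_iff_add_eq_zero]; exact hab'
      rw [this]; exact B.neg_mem b.2
    rw [h, AddSubgroup.mem_bot] at ha
    have hb : (b : Q) = 0 := by rw [ha] at hab'; simpa using hab'
    ext <;> simp [ha, hb]
  have hrange : f.range = A ⊔ B := by
    apply le_antisymm
    · rintro x ⟨⟨a, b⟩, rfl⟩
      exact add_mem_sup a.2 b.2
    · intro x hx
      rw [AddSubgroup.mem_sup] at hx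
      obtain ⟨a, ha, b, hb, rfl⟩ := hx
      exact ⟨(⟨a, ha⟩, ⟨b, hb⟩), rfl⟩
  calc Nat.card ↥(A ⊔ B) = Nat.card f.range := by rw [hrange]
  _ = Nat.card (A × B) := (Nat.card_congr (AddMonoidHom.ofInjective hinj).toEquiv).symm
  _ = Nat.card A * Nat.card B := Nat.card_prod _ _

universe u

lemma square_card : ∀ (N : ℕ) (Q : Type u) [AddCommGroup Q] [Finite Q]
    (B : Q → Q → QZ),
    (∀ g₁ g₂ h, B (g₁ + g₂) h = B g₁ h + B g₂ h) →
    (∀ g h₁ h₂, B g (h₁ + h₂) = B g h₁ + B g h₂) →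
    (∀ h, B h h = 0) →
    (∀ g, (∀ h, B g h = 0) → g = 0) →
    Nat.card Q ≤ N → ∃ m : ℕ, Nat.card Q = m ^ 2 := by
  intro N
  induction N using Nat.strong_induction_on with
  | _ N IH =>
  intro Q _ _ B haddL haddR halt hnondeg hcard
  -- bundled homs in each slot
  let L : Q → (Q →+ QZ) := fun w => AddMonoidHom.mk' (fun z => B z w) (fun a b => haddL a b w)
  let R : Q → (Q →+ QZ) := fun z => AddMonoidHom.mk' (fun w => B z w) (haddR z)
  have hLapp : ∀ z w, L w z = B z w := fun _ _ => rfl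
  have hRapp : ∀ z w, R z w = B z w := fun _ _ => rfl
  have hskew : ∀ a b, B b a = -B a b := by
    intro a b
    have h := halt (a + b)
    rw [haddL, haddR, haddR, halt, halt] at h
    rw [zero_add, add_zero] at h
    exact eq_neg_of_add_eq_zero_right h
  have hBsmulL : ∀ (a : ℤ) (z w : Q), B (a • z) w = a • B z w := fun a z w => map_zsmul (L w) a z
  have hBsmulR : ∀ (a : ℤ) (z w : Q), B z (a • w) = a • B z w := fun a z w => map_zsmul (R z) a w
  have hBsubL : ∀ (z u w : Q), B (z - u) w = B z w - B u w := fun z u w => (L w).map_sub z u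
  by_cases hsub : Subsingleton Q
  · exact ⟨1, by rw [one_pow, Nat.card_eq_one_iff_unique]; exact ⟨hsub, ⟨0⟩⟩⟩
  haveI : Nontrivial Q := not_subsingleton_iff_nontrivial.mp hsub
  set n := AddMonoid.exponent Q with hn
  have hn1 : 1 < n := AddMonoid.one_lt_exponent
  obtain ⟨x, hxo'⟩ := AddMonoid.exists_addOrderOf_eq_exponent
    (AddMonoid.ExponentExists.of_finite (G := Q))
  have hxo : addOrderOf x = n := by rw [hn]; exact hxo' 
  set g : QZ := π ((n : ℚ)⁻¹) with hgdef
  have hg : addOrderOf g = n := addOrderOf_g n (by omega)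
  have hexp : ∀ z : Q, n • z = 0 := fun z => AddMonoid.exponent_nsmul_eq_zero z
  have htor : ∀ z w : Q, B z w ∈ zmultiples g := by
    intro z w
    apply torsion_mem n (by omega)
    rw [← hRapp, ← map_nsmul, hexp, map_zero]
  -- find y with B x y = g
  have hgmem : g ∈ (R x).range := by
    have hle : (R x).range ≤ zmultiples g := by
      rintro _ ⟨w, rfl⟩; exact htor x w
    haveI hfing : Finite ↥(zmultiples g) := by
      refine (Nat.card_pos_iff.mp ?_).2
      rw [Nat.card_zmultiples, hg]; omega
    haveI hfinS : Finite ↥(R x).range := Finite.Set.subset _ hle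
    have hdvd1 : n ∣ AddMonoid.exponent ↥(R x).range := by
      rw [← hxo]
      apply addOrderOf_dvd_of_nsmul_eq_zero
      apply hnondeg
      intro w
      have : (AddMonoid.exponent ↥(R x).range) • B x w = 0 := by
        have hmem : B x w ∈ (R x).range := ⟨w, rfl⟩
        have := AddMonoid.exponent_nsmul_eq_zero (⟨B x w, hmem⟩ : ↥(R x).range)
        have h2 := congrArg (Subtype.val) this
        simpa using h2
      calc B (AddMonoid.exponent ↥(R x).range • x) w
          = (AddMonoid.exponent ↥(R x).range) • B x w := by
            rw [← hLapp, map_nsmul, hLapp]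
      _ = 0 := this
    have hdvd2 : AddMonoid.exponent ↥(R x).range ∣ Nat.card ↥(R x).range :=
      AddGroup.exponent_dvd_nat_card
    have hdvd3 : Nat.card ↥(R x).range ∣ n := by
      have := AddSubgroup.card_dvd_of_le hle
      rwa [Nat.card_zmultiples, hg] at this
    have hcardeq : Nat.card ↥(R x).range = n :=
      Nat.dvd_antisymm hdvd3 (dvd_trans hdvd1 hdvd2)
    have heq : (R x).range = zmultiples g := by
      apply AddSubgroup.eq_of_le_of_card_ge hle
      rw [Nat.card_zmultiples, hg, hcardeq]
    rw [heq]
    exact mem_zmultiples g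
  obtain ⟨y, hy⟩ := hgmem
  rw [hRapp] at hy
  -- order of y is n
  have hyo : addOrderOf y = n := by
    apply Nat.dvd_antisymm (show addOrderOf y ∣ n by rw [hn]; exact AddMonoid.addOrder_dvd_exponent y)
    rw [← hg]
    apply addOrderOf_dvd_of_nsmul_eq_zero
    rw [← hy, ← hRapp, ← map_nsmul, addOrderOf_nsmul_eq_zero, map_zero]
  -- x ∤ y independence
  have hnsmulx : (n : ℤ) • x = 0 := by
    rw [natCast_zsmul]; exact hexp x
  have hnsmuly : (n : ℤ) • y = 0 := by
    rw [natCast_zsmul]; exact hexp y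
  have hkillx : ∀ a : ℤ, a • g = 0 → a • x = 0 := by
    intro a ha
    rw [← addOrderOf_dvd_iff_zsmul_eq_zero, hg] at ha
    obtain ⟨c, rfl⟩ := ha
    rw [mul_smul, smul_comm, hnsmulx, smul_zero]
  have hkilly : ∀ a : ℤ, a • g = 0 → a • y = 0 := by
    intro a ha
    rw [← addOrderOf_dvd_iff_zsmul_eq_zero, hg] at ha
    obtain ⟨c, rfl⟩ := ha
    rw [mul_smul, smul_comm, hnsmuly, smul_zero]
  have hBxy_s : ∀ a : ℤ, B (a • x) y = a • g := by
    intro a; rw [← hLapp, map_zsmul, hLapp, hy]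
  have hByx : B y x = -g := by rw [hskew, hy]
  have hinf : zmultiples x ⊓ zmultiples y = ⊥ := by
    rw [eq_bot_iff]
    intro z hz
    rw [AddSubgroup.mem_inf] at hz
    obtain ⟨hz1, hz2⟩ := hz
    rw [AddSubgroup.mem_zmultiples_iff] at hz1 hz2
    obtain ⟨a, ha⟩ := hz1
    obtain ⟨b, hb⟩ := hz2
    have h1 : B z y = a • g := by rw [← ha, hBxy_s]
    have h2 : B z y = 0 := by
      rw [← hb, hBsmulL, halt, smul_zero]
    rw [AddSubgroup.mem_bot, ← ha]
    exact hkillx a (by rw [← h1, h2])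
  set U : AddSubgroup Q := zmultiples x ⊔ zmultiples y with hUdef
  have hcardU : Nat.card ↥U = n * n := by
    rw [hUdef, card_sup_of_disjoint _ _ hinf, Nat.card_zmultiples, Nat.card_zmultiples,
      hxo, hyo]
  set W : AddSubgroup Q := (L x).ker ⊓ (L y).ker with hWdef
  have hmemW : ∀ z : Q, z ∈ W ↔ B z x = 0 ∧ B z y = 0 := by
    intro z
    rw [hWdef, AddSubgroup.mem_inf, AddMonoidHom.mem_ker, AddMonoidHom.mem_ker, hLapp, hLapp]
  -- decomposition of arbitrary element
  have hdecomp : ∀ z : Q, ∃ u w : Q, u ∈ U ∧ w ∈ W ∧ z = u + w := by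
    intro z
    obtain ⟨a, ha⟩ := AddSubgroup.mem_zmultiples_iff.mp (htor z x)
    obtain ⟨b, hb⟩ := AddSubgroup.mem_zmultiples_iff.mp (htor z y)
    set u : Q := b • x + (-a) • y with hudef
    have hux : B u x = B z x := by
      rw [hudef, haddL, hBsmulL, hBsmulL, halt, hByx, smul_zero, zero_add, smul_neg,
        neg_smul, neg_neg, ha]
    have huy : B u y = B z y := by
      rw [hudef, haddL, hBsmulL, hBsmulL, halt, hy, smul_zero, add_zero, hb]
    refine ⟨u, z - u, ?_, ?_, by abel⟩
    · exact add_mem_sup (zsmul_mem (mem_zmultiples x) b) (zsmul_mem (mem_zmultiples y) (-a))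
    · rw [hmemW]
      constructor
      · rw [hBsubL, hux, sub_self]
      · rw [hBsubL, huy, sub_self]
  have hsup : U ⊔ W = ⊤ := by
    rw [eq_top_iff]
    intro z _
    obtain ⟨u, w, hu, hw, rfl⟩ := hdecomp z
    exact add_mem_sup hu hw
  have hUW : U ⊓ W = ⊥ := by
    rw [eq_bot_iff]
    intro z hz
    rw [AddSubgroup.mem_inf] at hz
    obtain ⟨hzU, hzW⟩ := hz
    rw [hmemW] at hzW
    obtain ⟨hz1, hz2⟩ := hzW
    rw [hUdef, AddSubgroup.mem_sup] at hzU
    obtain ⟨p, hp, q, hq, hpq⟩ := hzU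
    rw [AddSubgroup.mem_zmultiples_iff] at hp hq
    obtain ⟨a, rfl⟩ := hp
    obtain ⟨b, rfl⟩ := hq
    have h1 : B z y = a • g := by
      rw [← hpq, haddL, hBxy_s, hBsmulL, halt, smul_zero, add_zero]
    have hax : a • x = 0 := hkillx a (by rw [← h1, hz2])
    have hzby : z = b • y := by rw [← hpq, hax, zero_add]
    have h2 : B z x = b • (-g) := by
      rw [hzby, hBsmulL, hByx]
    have hbg : b • g = 0 := by
      have := h2.symm.trans hz1
      rw [smul_neg, neg_eq_zero] at this
      exact this
    rw [AddSubgroup.mem_bot, hzby]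
    exact hkilly b hbg
  -- cardinality decomposition
  have hcardQ : Nat.card Q = (n * n) * Nat.card ↥W := by
    rw [← AddSubgroup.card_top (G := Q), ← hsup, card_sup_of_disjoint _ _ hUW, hcardU]
  -- restricted pairing on W
  haveI : Finite ↥W := inferInstance
  have hWpos : 0 < Nat.card ↥W := Nat.card_pos
  have hQpos : 0 < Nat.card Q := Nat.card_pos
  have hWlt : Nat.card ↥W < N := by
    have h4 : 4 ≤ n * n := by nlinarith
    have : Nat.card ↥W < Nat.card Q := by
      rw [hcardQ]; nlinarith
    omega
  set BW : ↥W → ↥W → QZ := fun a b => B ↑a ↑b with hBWdef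
  obtain ⟨m, hm⟩ := IH (Nat.card ↥W) hWlt ↥W BW
    (by intro a b c; rw [hBWdef]; push_cast; rw [haddL])
    (by intro a b c; rw [hBWdef]; push_cast; rw [haddR])
    (fun a => halt _)
    (by
      intro a ha
      have hz : (a : Q) = 0 := by
        apply hnondeg
        intro z
        obtain ⟨u, w, hu, hw, rfl⟩ := hdecomp z
        have h1 : B (a : Q) w = 0 := ha ⟨w, hw⟩
        have h2 : B (a : Q) u = 0 := by
          rw [hUdef, AddSubgroup.mem_sup] at hu
          obtain ⟨p, hp, q, hq, hpq⟩ := hu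
          rw [AddSubgroup.mem_zmultiples_iff] at hp hq
          obtain ⟨c, rfl⟩ := hp
          obtain ⟨d, rfl⟩ := hq
          have haW := (hmemW a).mp a.2
          rw [← hpq, haddR, hBsmulR, hBsmulR, haW.1, haW.2, smul_zero, smul_zero, add_zero]
        rw [haddR, h1, h2, add_zero]
      exact Subtype.ext hz)
    (le_refl _)
  exact ⟨n * m, by rw [hcardQ, hm]; ring⟩
end

end IAS15

open IAS15

/-- If `H` is a finite abelian group with a biadditive, alternating,
nondegenerate pairing valued in `ℚ/ℤ`, and `C ≤ H` is a subgroup whose annihilator `C^⊥`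
satisfies `C^⊥ ⊆ C`, then the index of `C^⊥` in `C` is a perfect square:
`|C| = m² · |C^⊥|` for some natural number `m`. -/
theorem index_annihilator_square
    {H : Type*} [AddCommGroup H] [Finite H]
    (B : H → H → ℚ ⧸ AddSubgroup.zmultiples (1 : ℚ))
    (haddL : ∀ g₁ g₂ h, B (g₁ + g₂) h = B g₁ h + B g₂ h)
    (haddR : ∀ g h₁ h₂, B g (h₁ + h₂) = B g h₁ + B g h₂)
    (halt : ∀ h, B h h = 0)
    (hnondeg : ∀ g, (∀ h, B g h = 0) → g = 0)
    (C : AddSubgroup H)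
    (hperp_sub : ∀ h : H, (∀ c ∈ C, B h c = 0) → h ∈ C) :
    ∃ m : ℕ, Nat.card C = m ^ 2 * Nat.card {h : H // ∀ c ∈ C, B h c = 0} := by
  classical
  let L : H → (H →+ QZ) := fun w => AddMonoidHom.mk' (fun z => B z w) (fun a b => haddL a b w)
  have hskew : ∀ a b : H, B b a = -B a b := by
    intro a b
    have h := halt (a + b)
    rw [haddL, haddR, haddR, halt, halt] at h
    rw [zero_add, add_zero] at h
    exact eq_neg_of_add_eq_zero_right h
  let perp : AddSubgroup H :=
    { carrier := {h | ∀ c ∈ C, B h c = 0}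
      zero_mem' := by intro c _; exact (L c).map_zero
      add_mem' := by
        intro a b ha hb c hc
        rw [haddL, ha c hc, hb c hc, add_zero]
      neg_mem' := by
        intro a ha c hc
        have : B (-a) c = -B a c := (L c).map_neg a
        rw [this, ha c hc, neg_zero] }
  let P : AddSubgroup ↥C := perp.addSubgroupOf C
  let Q := ↥C ⧸ P
  let Φ : ↥C →+ (↥C →+ QZ) :=
    AddMonoidHom.mk'
      (fun c => AddMonoidHom.mk' (fun d => B (c : H) (d : H))
        (by
          intro d d'
          show B (c : H) ((d + d' : ↥C) : H) = B (c : H) d + B (c : H) d'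
          rw [AddSubgroup.coe_add, haddR]))
      (by
        intro c c'
        ext d
        show B ((c + c' : ↥C) : H) (d : H) = B (c : H) d + B (c' : H) d
        rw [AddSubgroup.coe_add, haddL])
  have hΦP : ∀ p ∈ P, Φ p = 0 := by
    intro p hp
    ext d
    show B (p : H) (d : H) = 0
    exact (AddSubgroup.mem_addSubgroupOf.mp hp) d d.2
  let Φbar : Q →+ (↥C →+ QZ) := QuotientAddGroup.lift P Φ hΦP
  have hker2 : ∀ q : Q, ∀ p ∈ P, Φbar q p = 0 := by
    intro q
    refine QuotientAddGroup.induction_on q ?_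
    intro c p hp
    show B (c : H) (p : H) = 0
    rw [hskew, (AddSubgroup.mem_addSubgroupOf.mp hp) c c.2, neg_zero]
  let Bb : Q → Q → QZ := fun q => QuotientAddGroup.lift P (Φbar q) (hker2 q)
  have hBb_mk : ∀ c d : ↥C, Bb (QuotientAddGroup.mk c) (QuotientAddGroup.mk d) = B c d :=
    fun _ _ => rfl
  have hmk_add : ∀ c d : ↥C, (QuotientAddGroup.mk (c + d) : Q) =
      QuotientAddGroup.mk c + QuotientAddGroup.mk d := fun _ _ => rfl
  obtain ⟨m, hm⟩ := square_card (Nat.card Q) Q Bb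
    (by
      intro q q' r
      refine QuotientAddGroup.induction_on q (fun c => ?_)
      refine QuotientAddGroup.induction_on q' (fun c' => ?_)
      refine QuotientAddGroup.induction_on r (fun d => ?_)
      show B ((c + c' : ↥C) : H) (d : H) = B (c : H) d + B (c' : H) d
      rw [AddSubgroup.coe_add, haddL])
    (by
      intro q r r'
      refine QuotientAddGroup.induction_on q (fun c => ?_)
      refine QuotientAddGroup.induction_on r (fun d => ?_)
      refine QuotientAddGroup.induction_on r' (fun d' => ?_)
      show B (c : H) ((d + d' : ↥C) : H) = B (c : H) d + B (c : H) d'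
      rw [AddSubgroup.coe_add, haddR])
    (by
      intro q
      refine QuotientAddGroup.induction_on q (fun c => ?_)
      show B (c : H) (c : H) = 0
      exact halt _)
    (by
      intro q
      refine QuotientAddGroup.induction_on q (fun c => ?_)
      intro hc
      have hmem : c ∈ P := by
        apply AddSubgroup.mem_addSubgroupOf.mpr
        intro h hh
        exact hc (QuotientAddGroup.mk (⟨h, hh⟩ : ↥C))
      exact (QuotientAddGroup.eq_zero_iff c).mpr hmem)
    (le_refl _)
  have h1 : Nat.card ↥C = Nat.card Q * Nat.card ↥P :=
    AddSubgroup.card_eq_card_quotient_mul_card_addSubgroup P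
  have e : ↥P ≃ {h : H // ∀ c ∈ C, B h c = 0} :=
    { toFun := fun p => ⟨(p : ↥C), AddSubgroup.mem_addSubgroupOf.mp p.2⟩
      invFun := fun x => ⟨⟨x.1, hperp_sub x.1 x.2⟩,
        AddSubgroup.mem_addSubgroupOf.mpr x.2⟩
      left_inv := fun p => Subtype.ext (Subtype.ext rfl)
      right_inv := fun x => Subtype.ext rfl }
  have h2 : Nat.card ↥P = Nat.card {h : H // ∀ c ∈ C, B h c = 0} := Nat.card_congr e
  exact ⟨m, by rw [h1, hm, h2]⟩
end
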